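/- arXiv:2504.10017 — 6 statements merged into one kernel-verified Lean document; each statement's English description precedes it below -/
import Mathlib

section
/- Let T > 0, let a > 0 be a constant, let k ≥ 1 be an integer and let λ ∈ ℝ. There exists a nontrivial T-periodic solution of −u'' = λu + a·u³ having exactly 2k zeros in [0,T) if and only if λ < σ_k := (2πk/T)². -/
open MeasureTheory Set Filter

noncomputable section


/-- The periodic eigenvalues `sigma_k = (2*pi*k/T)^2`. -/
def sigmaEV (T : ℝ) (k : ℕ) : ℝ := (2 * Real.pi * (k : ℝ) / T) ^ 2

/-- `u` is a `T`-periodic `C^2` solution of `-u'' = lam*u + a*u^3` (constant weight `a`). -/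
def PeriodicSolC (T a lam : ℝ) (u : ℝ → ℝ) : Prop :=
  Function.Periodic u T ∧ ContDiff ℝ 2 u ∧
    ∀ t : ℝ, -(deriv (deriv u) t) = lam * u t + a * u t ^ 3

/-- `u` has exactly `n` zeros in `[0, T)`. -/
def HasExactZeros (T : ℝ) (u : ℝ → ℝ) (n : ℕ) : Prop :=
  {t ∈ Set.Ico (0 : ℝ) T | u t = 0}.Finite ∧
    {t ∈ Set.Ico (0 : ℝ) T | u t = 0}.ncard = n

namespace S0

def wfun (m b θ : ℝ) : ℝ := m + b * Real.sin θ ^ 2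
def hfun (m b θ : ℝ) : ℝ := Real.sqrt (wfun m b θ)
def Gfun (m b y : ℝ) : ℝ := ∫ θ in (0:ℝ)..y, (hfun m b θ)⁻¹

variable {m b : ℝ}

lemma wfun_pos (hm : 0 < m) (hb : 0 ≤ b) (θ : ℝ) : 0 < wfun m b θ := by
  have h1 : 0 ≤ b * Real.sin θ ^ 2 := by positivity
  unfold wfun; linarith

lemma wfun_le (hb : 0 ≤ b) (θ : ℝ) : wfun m b θ ≤ m + b := by
  have h1 : Real.sin θ ^ 2 ≤ 1 := Real.sin_sq_le_one θ
  have := mul_le_mul_of_nonneg_left h1 hb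
  unfold wfun; linarith

lemma wfun_continuous : Continuous (wfun m b) := by
  unfold wfun; fun_prop

lemma hfun_pos (hm : 0 < m) (hb : 0 ≤ b) (θ : ℝ) : 0 < hfun m b θ :=
  Real.sqrt_pos.2 (wfun_pos hm hb θ)

lemma hfun_le (hm : 0 < m) (hb : 0 ≤ b) (θ : ℝ) : hfun m b θ ≤ Real.sqrt (m + b) :=
  Real.sqrt_le_sqrt (wfun_le hb θ)

lemma le_hfun (hm : 0 < m) (hb : 0 ≤ b) (θ : ℝ) : Real.sqrt m ≤ hfun m b θ := by
  apply Real.sqrt_le_sqrt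
  have : 0 ≤ b * Real.sin θ ^ 2 := by positivity
  unfold wfun; linarith

lemma hfun_sq (hm : 0 < m) (hb : 0 ≤ b) (θ : ℝ) : hfun m b θ ^ 2 = wfun m b θ :=
  Real.sq_sqrt (wfun_pos hm hb θ).le

lemma hfun_continuous (hm : 0 < m) (hb : 0 ≤ b) : Continuous (hfun m b) :=
  Real.continuous_sqrt.comp wfun_continuous

lemma wfun_hasDerivAt (θ : ℝ) :
    HasDerivAt (wfun m b) (2 * b * Real.sin θ * Real.cos θ) θ := by
  have h1 : HasDerivAt Real.sin (Real.cos θ) θ := Real.hasDerivAt_sin θ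
  have h2 : HasDerivAt (fun θ => Real.sin θ ^ 2) (2 * Real.sin θ * Real.cos θ) θ := by
    simpa using h1.fun_pow 2
  have h3 := (h2.const_mul b).const_add m
  exact h3.congr_deriv (by ring)

lemma hfun_hasDerivAt (hm : 0 < m) (hb : 0 ≤ b) (θ : ℝ) :
    HasDerivAt (hfun m b) (b * Real.sin θ * Real.cos θ / hfun m b θ) θ := by
  have h1 := (Real.hasDerivAt_sqrt (wfun_pos hm hb θ).ne').comp θ (wfun_hasDerivAt (m := m) (b := b) θ)
  refine h1.congr_deriv ?_
  unfold hfun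
  field_simp

lemma hfun_contDiff (hm : 0 < m) (hb : 0 ≤ b) : ContDiff ℝ 2 (hfun m b) := by
  rw [contDiff_iff_contDiffAt]
  intro θ
  exact (Real.contDiffAt_sqrt (wfun_pos hm hb θ).ne').comp θ
    ((contDiff_const.add (contDiff_const.mul (Real.contDiff_sin.pow 2))).contDiffAt)

lemma hfun_periodic : Function.Periodic (hfun m b) Real.pi := by
  intro θ
  unfold hfun wfun
  rw [Real.sin_add_pi]
  ring_nf

lemma inv_hfun_continuous (hm : 0 < m) (hb : 0 ≤ b) : Continuous fun θ => (hfun m b θ)⁻¹ :=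
  (hfun_continuous hm hb).inv₀ fun θ => (hfun_pos hm hb θ).ne'

lemma Gfun_hasDerivAt (hm : 0 < m) (hb : 0 ≤ b) (y : ℝ) :
    HasDerivAt (Gfun m b) (hfun m b y)⁻¹ y :=
  ((inv_hfun_continuous hm hb).integral_hasStrictDerivAt 0 y).hasDerivAt

lemma Gfun_continuous (hm : 0 < m) (hb : 0 ≤ b) : Continuous (Gfun m b) :=
  (fun y => (Gfun_hasDerivAt hm hb y).differentiableAt) |> Differentiable.continuous

lemma Gfun_strictMono (hm : 0 < m) (hb : 0 ≤ b) : StrictMono (Gfun m b) :=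
  strictMono_of_deriv_pos fun y => by
    rw [(Gfun_hasDerivAt hm hb y).deriv]
    exact inv_pos.2 (hfun_pos hm hb y)

lemma Gfun_zero : Gfun m b 0 = 0 := intervalIntegral.integral_same

lemma Gfun_intble (hm : 0 < m) (hb : 0 ≤ b) (x y : ℝ) :
    IntervalIntegrable (fun θ => (hfun m b θ)⁻¹) volume x y :=
  (inv_hfun_continuous hm hb).intervalIntegrable x y

lemma Gfun_ge (hm : 0 < m) (hb : 0 ≤ b) {y : ℝ} (hy : 0 ≤ y) :
    y * (Real.sqrt (m + b))⁻¹ ≤ Gfun m b y := by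
  have h1 : ∀ θ ∈ Set.Icc (0:ℝ) y, (Real.sqrt (m + b))⁻¹ ≤ (hfun m b θ)⁻¹ := by
    intro θ _
    exact inv_anti₀ (hfun_pos hm hb θ) (hfun_le hm hb θ)
  have h2 := intervalIntegral.integral_mono_on hy
    (intervalIntegrable_const) (Gfun_intble hm hb 0 y) h1
  simpa [mul_comm, Gfun] using h2

lemma Gfun_le_of_nonpos (hm : 0 < m) (hb : 0 ≤ b) {y : ℝ} (hy : y ≤ 0) :
    Gfun m b y ≤ y * (Real.sqrt (m + b))⁻¹ := by
  have h1 : ∀ θ ∈ Set.Icc y (0:ℝ), (Real.sqrt (m + b))⁻¹ ≤ (hfun m b θ)⁻¹ := by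
    intro θ _
    exact inv_anti₀ (hfun_pos hm hb θ) (hfun_le hm hb θ)
  have h2 := intervalIntegral.integral_mono_on hy
    (intervalIntegrable_const) (Gfun_intble hm hb y 0) h1
  have h3 : Gfun m b y = -∫ θ in y..(0:ℝ), (hfun m b θ)⁻¹ := by
    rw [← intervalIntegral.integral_symm]; rfl
  rw [h3]
  have h4 : (0 - y) * (Real.sqrt (m + b))⁻¹ ≤ ∫ θ in y..(0:ℝ), (hfun m b θ)⁻¹ := by
    simpa [mul_comm] using h2
  nlinarith [h4]

lemma Gfun_surjective (hm : 0 < m) (hb : 0 ≤ b) : Function.Surjective (Gfun m b) := by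
  have hc : (0:ℝ) < (Real.sqrt (m + b))⁻¹ := by
    have h5 : (0:ℝ) < m + b := by linarith
    positivity
  apply Continuous.surjective (Gfun_continuous hm hb)
  · apply tendsto_atTop_mono' atTop (Filter.eventually_atTop.2 ⟨0, fun y hy => Gfun_ge hm hb hy⟩)
    exact Tendsto.atTop_mul_const hc tendsto_id
  · apply tendsto_atBot_mono' atBot (Filter.eventually_atBot.2 ⟨0, fun y hy => Gfun_le_of_nonpos hm hb hy⟩)
    exact Tendsto.atBot_mul_const hc tendsto_id

lemma Gfun_le (hm : 0 < m) (hb : 0 ≤ b) {y : ℝ} (hy : 0 ≤ y) :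
    Gfun m b y ≤ y * (Real.sqrt m)⁻¹ := by
  have h1 : ∀ θ ∈ Set.Icc (0:ℝ) y, (hfun m b θ)⁻¹ ≤ (Real.sqrt m)⁻¹ := by
    intro θ _
    exact inv_anti₀ (Real.sqrt_pos.2 hm) (le_hfun hm hb θ)
  have h2 := intervalIntegral.integral_mono_on hy
    (Gfun_intble hm hb 0 y) (intervalIntegrable_const) h1
  simpa [mul_comm, Gfun] using h2

lemma Gfun_add_pi (hm : 0 < m) (hb : 0 ≤ b) (y : ℝ) :
    Gfun m b (y + Real.pi) = Gfun m b y + Gfun m b Real.pi := by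
  have hper : Function.Periodic (fun θ => (hfun m b θ)⁻¹) Real.pi :=
    fun θ => by simp [hfun_periodic θ]
  have h1 : Gfun m b (y + Real.pi) =
      Gfun m b y + ∫ θ in y..(y + Real.pi), (hfun m b θ)⁻¹ := by
    rw [Gfun, ← intervalIntegral.integral_add_adjacent_intervals (Gfun_intble hm hb 0 y)
      (Gfun_intble hm hb y (y + Real.pi))]; rfl
  rw [h1, hper.intervalIntegral_add_eq y 0]
  simp [Gfun]

lemma Gfun_int (hm : 0 < m) (hb : 0 ≤ b) (j : ℤ) :
    Gfun m b (j * Real.pi) = j * Gfun m b Real.pi := by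
  induction j using Int.induction_on with
  | zero => simp [Gfun_zero]
  | succ n ih =>
      have e1 : (((n:ℤ) + 1 : ℤ) : ℝ) * Real.pi = ((n:ℤ):ℝ) * Real.pi + Real.pi := by
        push_cast; ring
      rw [e1, Gfun_add_pi hm hb, ih]
      push_cast; ring
  | pred n ih =>
      have e1 : (((-n:ℤ)):ℝ) * Real.pi = (((-n - 1:ℤ)):ℝ) * Real.pi + Real.pi := by
        push_cast; ring
      have h2 := Gfun_add_pi hm hb ((((-n - 1:ℤ)):ℝ) * Real.pi)
      rw [← e1, ih] at h2
      have e2 : Gfun m b ((((-n - 1:ℤ)):ℝ) * Real.pi)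
          = ((-n:ℤ):ℝ) * Gfun m b Real.pi - Gfun m b Real.pi := by linarith
      rw [e2]; push_cast; ring

lemma Gfun_pi_pos (hm : 0 < m) (hb : 0 ≤ b) : 0 < Gfun m b Real.pi := by
  have := Gfun_strictMono hm hb Real.pi_pos
  rwa [Gfun_zero] at this

lemma backward_key (a lam A : ℝ) (hA : 0 < A)
    (hm : 0 < lam + a * A ^ 2 / 2) (hb : 0 ≤ a * A ^ 2 / 2) :
    ∃ u : ℝ → ℝ, ContDiff ℝ 2 u ∧
      (∀ t, -(deriv (deriv u) t) = lam * u t + a * u t ^ 3) ∧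
      Function.Periodic u (2 * Gfun (lam + a * A ^ 2 / 2) (a * A ^ 2 / 2) Real.pi) ∧
      (∀ t, u t = 0 ↔ ∃ j : ℤ, t = j * Gfun (lam + a * A ^ 2 / 2) (a * A ^ 2 / 2) Real.pi) ∧
      ¬(∀ t, u t = 0) := by
  set b := a * A ^ 2 / 2 with hbdef
  set m := lam + b with hmdef
  have hlam : lam = m - b := by rw [hmdef]; ring
  set Θ := Gfun m b Real.pi with hΘdef
  have hΘpos : 0 < Θ := Gfun_pi_pos hm hb
  set E := StrictMono.orderIsoOfSurjective (Gfun m b) (Gfun_strictMono hm hb)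
    (Gfun_surjective hm hb) with hEdef
  set φ : ℝ → ℝ := fun t => E.symm t with hφdef
  have hGφ : ∀ t, Gfun m b (φ t) = t := fun t => E.apply_symm_apply t
  have hφG : ∀ y, φ (Gfun m b y) = y := fun y =>
    StrictMono.orderIsoOfSurjective_symm_apply_self _ _ _ y
  have hφcont : Continuous φ := E.symm.continuous
  have hφderiv : ∀ t, HasDerivAt φ (hfun m b (φ t)) t := by
    intro t
    have h1 : HasDerivAt (Gfun m b) (hfun m b (φ t))⁻¹ (φ t) := Gfun_hasDerivAt hm hb (φ t)
    have h2 := HasDerivAt.of_local_left_inverse (hφcont.continuousAt)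
      h1 (inv_ne_zero (hfun_pos hm hb (φ t)).ne') (Filter.Eventually.of_forall hGφ)
    simpa using h2
  have hφdiff : Differentiable ℝ φ := fun t => (hφderiv t).differentiableAt
  have hφderiv' : deriv φ = fun t => hfun m b (φ t) := funext fun t => (hφderiv t).deriv
  have hφC1 : ContDiff ℝ 1 φ := by
    rw [contDiff_one_iff_deriv]
    exact ⟨hφdiff, hφderiv' ▸ (hfun_continuous hm hb).comp hφcont⟩
  have hφC2 : ContDiff ℝ 2 φ := by
    rw [show (2 : WithTop ℕ∞) = 1 + 1 from rfl, contDiff_succ_iff_deriv]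
    refine ⟨hφdiff, by simp, ?_⟩
    rw [hφderiv']
    exact ((hfun_contDiff hm hb).of_le (by norm_num)).comp hφC1
  refine ⟨fun t => A * Real.sin (φ t), ?_, ?_, ?_, ?_, ?_⟩
  · exact contDiff_const.mul (Real.contDiff_sin.of_le le_top |>.comp hφC2)
  · -- the ODE
    intro t
    have hu' : ∀ s, HasDerivAt (fun t => A * Real.sin (φ t))
        (A * (Real.cos (φ s) * hfun m b (φ s))) s := by
      intro s
      exact (((Real.hasDerivAt_sin (φ s)).comp s (hφderiv s)).const_mul A)
    have hderiv1 : deriv (fun t => A * Real.sin (φ t)) =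
        fun s => A * (Real.cos (φ s) * hfun m b (φ s)) := funext fun s => (hu' s).deriv
    rw [hderiv1]
    have hc1 : HasDerivAt (fun s => Real.cos (φ s)) (-Real.sin (φ t) * hfun m b (φ t)) t :=
      (Real.hasDerivAt_cos (φ t)).comp t (hφderiv t)
    have hc2 : HasDerivAt (fun s => hfun m b (φ s))
        (b * Real.sin (φ t) * Real.cos (φ t) / hfun m b (φ t) * hfun m b (φ t)) t :=
      (hfun_hasDerivAt hm hb (φ t)).comp t (hφderiv t)
    have hne : hfun m b (φ t) ≠ 0 := (hfun_pos hm hb (φ t)).ne'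
    have hc2' : HasDerivAt (fun s => hfun m b (φ s))
        (b * Real.sin (φ t) * Real.cos (φ t)) t := by
      convert hc2 using 1
      field_simp
    have hprod := ((hc1.fun_mul hc2').const_mul A)
    rw [hprod.deriv]
    have hsq : hfun m b (φ t) ^ 2 = m + b * Real.sin (φ t) ^ 2 := hfun_sq hm hb (φ t)
    have hcs : Real.cos (φ t) ^ 2 = 1 - Real.sin (φ t) ^ 2 := Real.cos_sq' (φ t)
    have hmb : m - b = lam := by rw [hmdef]; ring
    have hb2 : 2 * b = a * A ^ 2 := by rw [hbdef]; ring
    linear_combination (A * Real.sin (φ t)) * hsq - (A * b * Real.sin (φ t)) * hcs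
      + (A * Real.sin (φ t)) * hmb + (A * Real.sin (φ t) ^ 3) * hb2
  · -- periodicity
    intro t
    have hshift : ∀ s, φ (s + Θ) = φ s + Real.pi := by
      intro s
      apply (Gfun_strictMono hm hb).injective
      rw [hGφ, Gfun_add_pi hm hb, hGφ]
    have : φ (t + 2 * Θ) = φ t + 2 * Real.pi := by
      have e1 : t + 2 * Θ = t + Θ + Θ := by ring
      rw [e1, hshift, hshift]; ring
    simp only [this, Real.sin_add_two_pi]
  · -- zeros
    intro t
    constructor
    · intro ht
      have h0 : Real.sin (φ t) = 0 := by
        rcases mul_eq_zero.1 ht with h | h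
        · exact absurd h hA.ne'
        · exact h
      obtain ⟨j, hj⟩ := Real.sin_eq_zero_iff.1 h0
      refine ⟨j, ?_⟩
      have := hGφ t
      rw [← hj] at this
      rw [← this, Gfun_int hm hb]
    · rintro ⟨j, rfl⟩
      have : φ ((j : ℝ) * Θ) = j * Real.pi := by
        rw [← Gfun_int hm hb, hφG]
      simp only [this]
      simp [Real.sin_int_mul_pi]
  · -- nontrivial
    intro hall
    have := hall (Gfun m b (Real.pi / 2))
    simp only [hφG, Real.sin_pi_div_two, mul_one] at this
    exact absurd this hA.ne'

lemma le_wfun (hb : 0 ≤ b) (θ : ℝ) : m ≤ wfun m b θ := by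
  have : 0 ≤ b * Real.sin θ ^ 2 := by positivity
  unfold wfun; linarith

lemma Gfun_pi_ge_log (hm : 0 < m) (hb : 0 < b) :
    (Real.sqrt b)⁻¹ * (Real.log (Real.sqrt m + Real.sqrt b * Real.pi) - Real.log (Real.sqrt m))
      ≤ Gfun m b Real.pi := by
  have hsm : 0 < Real.sqrt m := Real.sqrt_pos.2 hm
  have hsb : 0 < Real.sqrt b := Real.sqrt_pos.2 hb
  have hposd : ∀ θ ∈ Set.uIcc (0:ℝ) Real.pi, 0 < Real.sqrt m + Real.sqrt b * θ := by
    intro θ hθ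
    rw [Set.uIcc_of_le Real.pi_pos.le] at hθ
    nlinarith [hθ.1]
  have hpt : ∀ θ ∈ Set.Icc (0:ℝ) Real.pi,
      (Real.sqrt m + Real.sqrt b * θ)⁻¹ ≤ (hfun m b θ)⁻¹ := by
    intro θ hθ
    apply inv_anti₀ (hfun_pos hm hb.le θ)
    have h1 : Real.sin θ ^ 2 ≤ θ ^ 2 := by
      have hs0 : 0 ≤ Real.sin θ := Real.sin_nonneg_of_nonneg_of_le_pi hθ.1 hθ.2
      have hs1 : Real.sin θ ≤ θ := Real.sin_le hθ.1
      nlinarith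
    have h2 : wfun m b θ ≤ (Real.sqrt m + Real.sqrt b * θ) ^ 2 := by
      have e1 : Real.sqrt m ^ 2 = m := Real.sq_sqrt hm.le
      have e2 : Real.sqrt b ^ 2 = b := Real.sq_sqrt hb.le
      have e3 : 0 ≤ Real.sqrt m * (Real.sqrt b * θ) := mul_nonneg hsm.le (mul_nonneg hsb.le hθ.1)
      have e4 : b * Real.sin θ ^ 2 ≤ b * θ ^ 2 := by
        exact mul_le_mul_of_nonneg_left h1 hb.le
      unfold wfun
      nlinarith
    calc hfun m b θ ≤ Real.sqrt ((Real.sqrt m + Real.sqrt b * θ) ^ 2) := Real.sqrt_le_sqrt h2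
    _ = Real.sqrt m + Real.sqrt b * θ := Real.sqrt_sq (add_nonneg hsm.le (mul_nonneg hsb.le hθ.1))
  have hcont : ContinuousOn (fun θ => (Real.sqrt m + Real.sqrt b * θ)⁻¹)
      (Set.uIcc (0:ℝ) Real.pi) :=
    (continuousOn_const.add (continuousOn_const.mul continuousOn_id)).inv₀
      fun θ hθ => (hposd θ hθ).ne'
  have hint : IntervalIntegrable (fun θ => (Real.sqrt m + Real.sqrt b * θ)⁻¹)
      volume 0 Real.pi := hcont.intervalIntegrable
  have hΦ : ∀ θ ∈ Set.uIcc (0:ℝ) Real.pi,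
      HasDerivAt (fun θ => (Real.sqrt b)⁻¹ * Real.log (Real.sqrt m + Real.sqrt b * θ))
        ((Real.sqrt m + Real.sqrt b * θ)⁻¹) θ := by
    intro θ hθ
    have haff : HasDerivAt (fun θ : ℝ => Real.sqrt m + Real.sqrt b * θ) (Real.sqrt b) θ := by
      simpa using ((hasDerivAt_id θ).const_mul (Real.sqrt b)).const_add (Real.sqrt m)
    have hlog := (Real.hasDerivAt_log (hposd θ hθ).ne').comp θ haff
    have := hlog.const_mul (Real.sqrt b)⁻¹
    refine this.congr_deriv ?_
    field_simp
  have heq := intervalIntegral.integral_eq_sub_of_hasDerivAt hΦ hint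
  have hmono := intervalIntegral.integral_mono_on Real.pi_pos.le hint
    (Gfun_intble hm hb.le 0 Real.pi) hpt
  rw [heq] at hmono
  simp only [mul_zero, add_zero] at hmono
  calc (Real.sqrt b)⁻¹ * (Real.log (Real.sqrt m + Real.sqrt b * Real.pi) - Real.log (Real.sqrt m))
      = (Real.sqrt b)⁻¹ * Real.log (Real.sqrt m + Real.sqrt b * Real.pi)
        - (Real.sqrt b)⁻¹ * Real.log (Real.sqrt m) := by ring
  _ ≤ Gfun m b Real.pi := hmono

lemma exists_lower_m (c' lam : ℝ) (hc' : 0 < c') (hlam : lam ≤ 0) :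
    ∃ m : ℝ, 0 < m ∧ lam < m ∧ c' ≤ Gfun m (m - lam) Real.pi := by
  rcases eq_or_lt_of_le hlam with heq | hlt
  · -- lam = 0
    subst heq
    set L := Real.log (1 + Real.pi) with hLdef
    have hL : 0 < L := Real.log_pos (by nlinarith [Real.pi_pos])
    set m := min 1 ((L / c') ^ 2) with hmdef
    have hm : 0 < m := lt_min one_pos (by positivity)
    have hsm : 0 < Real.sqrt m := Real.sqrt_pos.2 hm
    refine ⟨m, hm, hm, ?_⟩
    have hsqm : Real.sqrt m ≤ L / c' := by
      calc Real.sqrt m ≤ Real.sqrt ((L / c') ^ 2) :=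
            Real.sqrt_le_sqrt (min_le_right _ _)
      _ = L / c' := Real.sqrt_sq (by positivity)
    have hkey := Gfun_pi_ge_log (m := m) (b := m - 0) (by linarith) (by simpa using hm)
    simp only [sub_zero] at hkey ⊢
    have hlogeq : Real.log (Real.sqrt m + Real.sqrt m * Real.pi)
        - Real.log (Real.sqrt m) = L := by
      rw [show Real.sqrt m + Real.sqrt m * Real.pi
          = Real.sqrt m * (1 + Real.pi) by ring,
        Real.log_mul hsm.ne' (by nlinarith [Real.pi_pos])]
      ring
    rw [hlogeq] at hkey
    have h5 : c' * Real.sqrt m ≤ L := by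
      calc c' * Real.sqrt m ≤ c' * (L / c') := by gcongr
      _ = L := by field_simp
    calc c' ≤ (Real.sqrt m)⁻¹ * L := by
          rw [inv_mul_eq_div, le_div_iff₀ hsm]; linarith [h5]
    _ ≤ Gfun m m Real.pi := hkey
  · -- lam < 0
    have hml : 0 < -lam := by linarith
    set R := Real.sqrt (1 - lam) * c' with hRdef
    have h1l : 0 < Real.sqrt (1 - lam) := Real.sqrt_pos.2 (by linarith)
    have hR : 0 < R := by positivity
    have hexp : 0 < Real.exp R := Real.exp_pos R
    set m := min 1 ((Real.pi * Real.sqrt (-lam) / Real.exp R) ^ 2) with hmdef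
    have hm : 0 < m := lt_min one_pos (by positivity)
    have hsm : 0 < Real.sqrt m := Real.sqrt_pos.2 hm
    have hb : 0 < m - lam := by linarith
    have hsb : 0 < Real.sqrt (m - lam) := Real.sqrt_pos.2 hb
    refine ⟨m, hm, by linarith, ?_⟩
    have hsqm : Real.sqrt m ≤ Real.pi * Real.sqrt (-lam) / Real.exp R := by
      calc Real.sqrt m ≤ Real.sqrt ((Real.pi * Real.sqrt (-lam) / Real.exp R) ^ 2) :=
            Real.sqrt_le_sqrt (min_le_right _ _)
      _ = Real.pi * Real.sqrt (-lam) / Real.exp R := Real.sqrt_sq (by positivity)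
    have hbl : Real.sqrt (-lam) ≤ Real.sqrt (m - lam) := Real.sqrt_le_sqrt (by linarith)
    have hbu : Real.sqrt (m - lam) ≤ Real.sqrt (1 - lam) := by
      apply Real.sqrt_le_sqrt
      have : m ≤ 1 := min_le_left _ _
      linarith
    have hkey := Gfun_pi_ge_log (m := m) (b := m - lam) hm hb
    -- the log term is at least R
    have hlower : R ≤ Real.log (Real.sqrt m + Real.sqrt (m - lam) * Real.pi)
        - Real.log (Real.sqrt m) := by
      rw [← Real.log_div (by positivity) hsm.ne']
      rw [Real.le_log_iff_exp_le (by positivity)]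
      rw [le_div_iff₀ hsm]
      have h6 : Real.exp R * Real.sqrt m ≤ Real.pi * Real.sqrt (-lam) := by
        rw [mul_comm]
        rw [← le_div_iff₀ hexp] at *
        exact hsqm
      have h7 : Real.sqrt (-lam) * Real.pi ≤ Real.sqrt (m - lam) * Real.pi := by
        gcongr
      nlinarith [Real.pi_pos, hsm.le]
    calc c' = (Real.sqrt (1 - lam))⁻¹ * R := by
          rw [hRdef]; field_simp
    _ ≤ (Real.sqrt (m - lam))⁻¹ * R := by gcongr
    _ ≤ (Real.sqrt (m - lam))⁻¹ * (Real.log (Real.sqrt m + Real.sqrt (m - lam) * Real.pi)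
          - Real.log (Real.sqrt m)) := by
        apply mul_le_mul_of_nonneg_left hlower (by positivity)
    _ ≤ Gfun m (m - lam) Real.pi := hkey

lemma exists_A (a lam c' : ℝ) (ha : 0 < a) (hc' : 0 < c') (m₁ : ℝ) (hm₁ : 0 < m₁)
    (hlm : lam < m₁) (hlow : c' ≤ Gfun m₁ (m₁ - lam) Real.pi) :
    ∃ A : ℝ, 0 < A ∧ 0 < lam + a * A ^ 2 / 2 ∧
      Gfun (lam + a * A ^ 2 / 2) (a * A ^ 2 / 2) Real.pi = c' := by
  set A₁ := Real.sqrt (2 * (m₁ - lam) / a) with hA₁def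
  have hA₁ : 0 < A₁ := Real.sqrt_pos.2 (div_pos (by linarith) ha)
  have hA₁sq : a * A₁ ^ 2 / 2 = m₁ - lam := by
    rw [hA₁def, Real.sq_sqrt (div_pos (by linarith) ha).le]
    field_simp
  set σ' := |(Real.pi / c') ^ 2 - lam| + 1 with hσ'def
  have hσ' : 0 < σ' := by positivity
  have hσ'2 : (Real.pi / c') ^ 2 - lam < σ' := by
    have := le_abs_self ((Real.pi / c') ^ 2 - lam)
    linarith
  set A₂ := A₁ + Real.sqrt (2 * σ' / a) with hA₂def
  have hA₂ : A₁ ≤ A₂ := by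
    rw [hA₂def]
    have h0 : 0 ≤ Real.sqrt (2 * σ' / a) := Real.sqrt_nonneg _
    linarith
  have hA₂sq : σ' ≤ a * A₂ ^ 2 / 2 := by
    have hs2 : Real.sqrt (2 * σ' / a) ^ 2 = 2 * σ' / a := Real.sq_sqrt (by positivity)
    have h9 : a * Real.sqrt (2 * σ' / a) ^ 2 = 2 * σ' := by
      rw [hs2]; field_simp
    rw [hA₂def]
    nlinarith [h9, sq_nonneg A₁, mul_nonneg (mul_nonneg ha.le hA₁.le) (Real.sqrt_nonneg (2 * σ' / a))]
  have hm₂ : (Real.pi / c') ^ 2 < lam + a * A₂ ^ 2 / 2 := by linarith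
  -- the modified, globally continuous period map
  set F : ℝ → ℝ := fun A => ∫ θ in (0:ℝ)..Real.pi,
      (Real.sqrt (max m₁ (wfun (lam + a * A ^ 2 / 2) (a * A ^ 2 / 2) θ)))⁻¹ with hFdef
  have hcF : Continuous (Function.uncurry fun A θ =>
      (Real.sqrt (max m₁ (wfun (lam + a * A ^ 2 / 2) (a * A ^ 2 / 2) θ)))⁻¹) := by
    apply Continuous.inv₀
    · apply Real.continuous_sqrt.comp
      apply continuous_const.max
      unfold wfun
      fun_prop
    · intro p
      have h3 : m₁ ≤ max m₁ (wfun (lam + a * p.1 ^ 2 / 2) (a * p.1 ^ 2 / 2) p.2) :=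
        le_max_left _ _
      exact (Real.sqrt_pos.2 (lt_of_lt_of_le hm₁ h3)).ne'
  have hF : Continuous F :=
    intervalIntegral.continuous_parametric_intervalIntegral_of_continuous' hcF 0 Real.pi
  -- F agrees with Gfun for A ≥ A₁
  have hFeq : ∀ A, A₁ ≤ A → F A = Gfun (lam + a * A ^ 2 / 2) (a * A ^ 2 / 2) Real.pi := by
    intro A hA
    have hsq : A₁ ^ 2 ≤ A ^ 2 := pow_le_pow_left₀ hA₁.le hA 2
    have hmA : m₁ ≤ lam + a * A ^ 2 / 2 := by nlinarith
    apply intervalIntegral.integral_congr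
    intro θ _
    have h4 : m₁ ≤ wfun (lam + a * A ^ 2 / 2) (a * A ^ 2 / 2) θ :=
      le_trans hmA (le_wfun (by positivity) θ)
    simp only [max_eq_right h4]
    rfl
  have hbA₂ : 0 < lam + a * A₂ ^ 2 / 2 := by
    have : 0 < (Real.pi / c') ^ 2 := by positivity
    linarith
  have hFA₁ : c' ≤ F A₁ := by
    rw [hFeq A₁ le_rfl]
    have e1 : lam + a * A₁ ^ 2 / 2 = m₁ := by rw [hA₁sq]; ring
    rw [e1, hA₁sq]
    exact hlow
  have hFA₂ : F A₂ ≤ c' := by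
    rw [hFeq A₂ hA₂]
    have h5 := Gfun_le (m := lam + a * A₂ ^ 2 / 2) (b := a * A₂ ^ 2 / 2) hbA₂
      (by positivity) Real.pi_pos.le
    have h6 : Real.pi / c' ≤ Real.sqrt (lam + a * A₂ ^ 2 / 2) := by
      calc Real.pi / c' = Real.sqrt ((Real.pi / c') ^ 2) := (Real.sqrt_sq (by positivity)).symm
      _ ≤ _ := Real.sqrt_le_sqrt hm₂.le
    have h7 : 0 < Real.sqrt (lam + a * A₂ ^ 2 / 2) := Real.sqrt_pos.2 hbA₂
    have h8 : Real.pi * (Real.sqrt (lam + a * A₂ ^ 2 / 2))⁻¹ ≤ c' := by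
      rw [mul_inv_le_iff₀ h7]
      rw [div_le_iff₀ hc'] at h6
      nlinarith
    linarith
  obtain ⟨A, hAmem, hAval⟩ := intermediate_value_Icc' hA₂ hF.continuousOn ⟨hFA₂, hFA₁⟩
  refine ⟨A, lt_of_lt_of_le hA₁ hAmem.1, ?_, ?_⟩
  · have hsq : A₁ ^ 2 ≤ A ^ 2 := pow_le_pow_left₀ hA₁.le hAmem.1 2
    nlinarith
  · rw [← hFeq A hAmem.1]
    exact hAval

lemma backward (T a : ℝ) (hT : 0 < T) (ha : 0 < a) (k : ℕ) (hk : 1 ≤ k) (lam : ℝ)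
    (hlam : lam < sigmaEV T k) :
    ∃ u : ℝ → ℝ, PeriodicSolC T a lam u ∧ (¬ ∀ t, u t = 0) ∧ HasExactZeros T u (2 * k) := by
  have hkR : (0:ℝ) < (k : ℝ) := by exact_mod_cast hk
  set c' := T / (2 * k) with hc'def
  have hc' : 0 < c' := by positivity
  have hσ : 0 < sigmaEV T k := by
    have : 0 < 2 * Real.pi * k / T := by positivity
    unfold sigmaEV; positivity
  have hsqrtσ : Real.sqrt (sigmaEV T k) = 2 * Real.pi * k / T := by
    unfold sigmaEV
    exact Real.sqrt_sq (by positivity)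
  have hπσ : Real.pi * (Real.sqrt (sigmaEV T k))⁻¹ = c' := by
    rw [hsqrtσ, hc'def]
    have hπ := Real.pi_ne_zero
    field_simp
  -- find m₁ with a lower bound on the half-period
  obtain ⟨m₁, hm₁, hlm, hlow⟩ :
      ∃ m : ℝ, 0 < m ∧ lam < m ∧ c' ≤ Gfun m (m - lam) Real.pi := by
    rcases le_or_gt lam 0 with h0 | h0
    · exact exists_lower_m c' lam hc' h0
    · refine ⟨lam + (sigmaEV T k - lam) / 4, by linarith, by linarith, ?_⟩
      have hb4 : (0:ℝ) < (sigmaEV T k - lam) / 4 := by linarith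
      have hmb : lam + (sigmaEV T k - lam) / 4 + (lam + (sigmaEV T k - lam) / 4 - lam)
          = lam + (sigmaEV T k - lam) / 2 := by ring
      have hkey := Gfun_ge (m := lam + (sigmaEV T k - lam) / 4)
        (b := lam + (sigmaEV T k - lam) / 4 - lam) (by linarith) (by linarith) Real.pi_pos.le
      rw [hmb] at hkey
      have h2 : Real.sqrt (lam + (sigmaEV T k - lam) / 2) ≤ Real.sqrt (sigmaEV T k) :=
        Real.sqrt_le_sqrt (by linarith)
      have h3 : 0 < Real.sqrt (lam + (sigmaEV T k - lam) / 2) :=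
        Real.sqrt_pos.2 (by linarith)
      have h4 : (Real.sqrt (sigmaEV T k))⁻¹ ≤ (Real.sqrt (lam + (sigmaEV T k - lam) / 2))⁻¹ :=
        inv_anti₀ h3 h2
      calc c' = Real.pi * (Real.sqrt (sigmaEV T k))⁻¹ := hπσ.symm
      _ ≤ Real.pi * (Real.sqrt (lam + (sigmaEV T k - lam) / 2))⁻¹ := by
          exact mul_le_mul_of_nonneg_left h4 Real.pi_pos.le
      _ ≤ _ := hkey
  obtain ⟨A, hA, hmA, hval⟩ := exists_A a lam c' ha hc' m₁ hm₁ hlm hlow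
  obtain ⟨u, hC2, hode, hper, hzeros, hnt⟩ := backward_key a lam A hA hmA (by positivity)
  rw [hval] at hper hzeros
  have hTeq : (k : ℝ) * (2 * c') = T := by
    rw [hc'def]; field_simp
  set N := 2 * k with hNdef
  have hNc : ((N:ℕ):ℝ) * c' = T := by
    rw [hNdef]; push_cast; linarith [hTeq]
  have hinj : Function.Injective (fun n : ℕ => (n:ℝ) * c') := by
    intro p q h
    have hpq : (p:ℝ) = q := mul_right_cancel₀ hc'.ne' h
    exact_mod_cast hpq
  have hSet : {t ∈ Set.Ico (0:ℝ) T | u t = 0}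
      = ↑((Finset.range N).image (fun n : ℕ => (n:ℝ) * c')) := by
    ext t
    constructor
    · rintro ⟨⟨ht0, htT⟩, hz⟩
      obtain ⟨j, rfl⟩ := (hzeros t).1 hz
      have hj0 : 0 ≤ j := by
        by_contra hneg
        push_neg at hneg
        have hj1' : j ≤ -1 := by omega
        have hj1 : (j:ℝ) ≤ -1 := by exact_mod_cast hj1'
        nlinarith
      have hjN : j < (N:ℤ) := by
        by_contra hge
        push_neg at hge
        have h6 : ((N:ℤ):ℝ) ≤ (j:ℝ) := by exact_mod_cast hge
        push_cast at h6
        nlinarith [htT, hNc]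
      simp only [Finset.coe_image, Set.mem_image, Finset.mem_coe, Finset.mem_range]
      refine ⟨j.toNat, by omega, ?_⟩
      show ((j.toNat : ℕ):ℝ) * c' = j * c'
      congr 1
      exact_mod_cast Int.toNat_of_nonneg hj0
    · intro ht
      simp only [Finset.coe_image, Set.mem_image, Finset.mem_coe, Finset.mem_range] at ht
      obtain ⟨n, hn, rfl⟩ := ht
      have hnR : ((n:ℕ):ℝ) < (N:ℕ) := by exact_mod_cast hn
      refine ⟨⟨by positivity, ?_⟩, ?_⟩
      · rw [← hNc]; nlinarith
      · exact (hzeros _).2 ⟨n, by push_cast; ring⟩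
  refine ⟨u, ⟨?_, hC2, hode⟩, hnt, ?_, ?_⟩
  · -- periodicity with period T
    have := hper.nat_mul k
    rwa [hTeq] at this
  · -- finiteness of the zero set
    rw [hSet]
    exact (((Finset.range N).image fun n : ℕ => (n:ℝ) * c')).finite_toSet
  · rw [hSet, Set.ncard_coe_finset, Finset.card_image_of_injective _ hinj, Finset.card_range]

lemma gap_lt_pos (a lam : ℝ) (ha : 0 < a) (hlam : 0 < lam) (u : ℝ → ℝ)
    (hC2 : ContDiff ℝ 2 u)
    (hode : ∀ t, -(deriv (deriv u) t) = lam * u t + a * u t ^ 3)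
    (z₁ z₂ : ℝ) (hz : z₁ < z₂) (h1 : u z₁ = 0) (h2 : u z₂ = 0)
    (hpos : ∀ t ∈ Set.Ioo z₁ z₂, 0 < u t) :
    z₂ - z₁ < Real.pi / Real.sqrt lam := by
  by_contra hcon
  push_neg at hcon
  set r := Real.sqrt lam with hrdef
  have hr : 0 < r := Real.sqrt_pos.2 hlam
  have hr2 : r ^ 2 = lam := Real.sq_sqrt hlam.le
  set c := z₁ + Real.pi / r with hcdef
  have hcz : c ≤ z₂ := by rw [hcdef]; linarith
  have hz₁c : z₁ < c := by
    rw [hcdef]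
    have : 0 < Real.pi / r := by positivity
    linarith
  have hud : Differentiable ℝ u := hC2.differentiable (by norm_num)
  have hd2 : ContDiff ℝ 1 (deriv u) := by
    have h5 := hC2
    rw [show (2 : WithTop ℕ∞) = 1 + 1 from rfl, contDiff_succ_iff_deriv] at h5
    exact h5.2.2
  have hud2 : Differentiable ℝ (deriv u) := hd2.differentiable (by norm_num)
  have huu : ∀ t, HasDerivAt u (deriv u t) t := fun t => (hud t).hasDerivAt
  have huu2 : ∀ t, HasDerivAt (deriv u) (-(lam * u t + a * u t ^ 3)) t := by
    intro t
    have h6 : deriv (deriv u) t = -(lam * u t + a * u t ^ 3) := by linarith [hode t]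
    have := (hud2 t).hasDerivAt
    rwa [h6] at this
  set v : ℝ → ℝ := fun t => Real.sin (r * (t - z₁)) with hvdef
  have haff : ∀ t : ℝ, HasDerivAt (fun s : ℝ => r * (s - z₁)) r t := by
    intro t
    simpa using ((hasDerivAt_id t).sub_const z₁).const_mul r
  have hv : ∀ t, HasDerivAt v (r * Real.cos (r * (t - z₁))) t := by
    intro t
    have := (Real.hasDerivAt_sin (r * (t - z₁))).comp t (haff t)
    refine this.congr_deriv ?_
    ring
  have hv' : ∀ t, HasDerivAt (fun s => r * Real.cos (r * (s - z₁))) (-(r ^ 2 * v t)) t := by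
    intro t
    have := ((Real.hasDerivAt_cos (r * (t - z₁))).comp t (haff t)).const_mul r
    refine this.congr_deriv ?_
    rw [hvdef]
    ring
  set W : ℝ → ℝ := fun t => deriv u t * v t - u t * (r * Real.cos (r * (t - z₁))) with hWdef
  have hW : ∀ t, HasDerivAt W
      ((-(lam * u t + a * u t ^ 3)) * v t + deriv u t * (r * Real.cos (r * (t - z₁)))
        - (deriv u t * (r * Real.cos (r * (t - z₁))) + u t * (-(r ^ 2 * v t)))) t := by
    intro t
    exact ((huu2 t).mul (hv t)).sub ((huu t).mul (hv' t))
  have hWval : ∀ t, (-(lam * u t + a * u t ^ 3)) * v t + deriv u t * (r * Real.cos (r * (t - z₁)))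
      - (deriv u t * (r * Real.cos (r * (t - z₁))) + u t * (-(r ^ 2 * v t)))
      = -(a * u t ^ 3 * v t) := by
    intro t
    linear_combination (u t * v t) * hr2
  have hWcont : ContinuousOn W (Set.Icc z₁ c) :=
    (Differentiable.continuous fun t => (hW t).differentiableAt).continuousOn
  have hWanti : StrictAntiOn W (Set.Icc z₁ c) := by
    apply strictAntiOn_of_deriv_neg (convex_Icc z₁ c) hWcont
    intro t ht
    rw [interior_Icc] at ht
    rw [(hW t).deriv, hWval t]
    have hu : 0 < u t := hpos t ⟨ht.1, lt_of_lt_of_le ht.2 hcz⟩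
    have hvpos : 0 < v t := by
      apply Real.sin_pos_of_pos_of_lt_pi
      · have : 0 < t - z₁ := by linarith [ht.1]
        positivity
      · have h7 : t - z₁ < Real.pi / r := by
          have := ht.2
          rw [hcdef] at this
          linarith
        calc r * (t - z₁) < r * (Real.pi / r) := by
              exact mul_lt_mul_of_pos_left h7 hr
        _ = Real.pi := by field_simp
    have h8 : 0 < a * u t ^ 3 * v t := mul_pos (mul_pos ha (pow_pos hu 3)) hvpos
    linarith
  have hWz₁ : W z₁ = 0 := by
    rw [hWdef]
    simp [hvdef, h1]
  have hWc : W c = r * u c := by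
    have e1 : r * (c - z₁) = Real.pi := by
      rw [hcdef]; field_simp; ring
    simp only [hWdef, hvdef]
    rw [e1, Real.sin_pi, Real.cos_pi]
    ring
  have hWcneg : W c < 0 := by
    have := hWanti (Set.left_mem_Icc.2 hz₁c.le) (Set.right_mem_Icc.2 hz₁c.le) hz₁c
    rwa [hWz₁] at this
  have hucnn : 0 ≤ u c := by
    rcases eq_or_lt_of_le hcz with he | hlt
    · rw [he, h2]
    · exact (hpos c ⟨hz₁c, hlt⟩).le
  rw [hWc] at hWcneg
  nlinarith

lemma gap_lt (a lam : ℝ) (ha : 0 < a) (hlam : 0 < lam) (u : ℝ → ℝ)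
    (hC2 : ContDiff ℝ 2 u)
    (hode : ∀ t, -(deriv (deriv u) t) = lam * u t + a * u t ^ 3)
    (z₁ z₂ : ℝ) (hz : z₁ < z₂) (h1 : u z₁ = 0) (h2 : u z₂ = 0)
    (hne : ∀ t ∈ Set.Ioo z₁ z₂, u t ≠ 0) :
    z₂ - z₁ < Real.pi / Real.sqrt lam := by
  have hucont : Continuous u := hC2.continuous
  set mid := (z₁ + z₂) / 2 with hmid
  have hmidmem : mid ∈ Set.Ioo z₁ z₂ := ⟨by rw [hmid]; linarith, by rw [hmid]; linarith⟩
  have hsign : ∀ w : ℝ → ℝ, Continuous w → (∀ t ∈ Set.Ioo z₁ z₂, w t ≠ 0) → 0 < w mid →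
      ∀ t ∈ Set.Ioo z₁ z₂, 0 < w t := by
    intro w hwc hwne hwmid t ht
    rcases lt_trichotomy (w t) 0 with hlt | he | hgt
    · exfalso
      rcases lt_trichotomy t mid with htm | rfl | htm
      · have hsub := intermediate_value_Ioo htm.le hwc.continuousOn
        have h0 : (0:ℝ) ∈ Set.Ioo (w t) (w mid) := ⟨hlt, hwmid⟩
        obtain ⟨s, hs, hws⟩ := hsub h0
        exact hwne s ⟨lt_trans ht.1 hs.1, lt_trans hs.2 hmidmem.2⟩ hws
      · linarith
      · have hsub := intermediate_value_Ioo' htm.le hwc.continuousOn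
        have h0 : (0:ℝ) ∈ Set.Ioo (w t) (w mid) := ⟨hlt, hwmid⟩
        obtain ⟨s, hs, hws⟩ := hsub h0
        exact hwne s ⟨lt_trans hmidmem.1 hs.1, lt_trans hs.2 ht.2⟩ hws
    · exact absurd he (hwne t ht)
    · exact hgt
  rcases lt_trichotomy (u mid) 0 with hmidneg | hmid0 | hmidpos
  · -- apply the positive case to -u
    have hC2' : ContDiff ℝ 2 (fun t => -u t) := hC2.neg
    have hderiv1 : deriv (fun t => -u t) = fun t => -deriv u t := funext fun t => deriv.neg
    have hode' : ∀ t, -(deriv (deriv (fun t => -u t)) t)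
        = lam * (-u t) + a * (-u t) ^ 3 := by
      intro t
      rw [hderiv1]
      have e2 : deriv (fun t => -deriv u t) t = -(deriv (deriv u) t) := deriv.neg
      rw [e2]
      linear_combination -(hode t)
    have hposneg := hsign (fun t => -u t) hucont.neg
      (fun t ht => neg_ne_zero.2 (hne t ht)) (by simpa using hmidneg)
    exact gap_lt_pos a lam ha hlam (fun t => -u t) hC2' hode' z₁ z₂ hz
      (by simp [h1]) (by simp [h2]) hposneg
  · exact absurd hmid0 (hne mid hmidmem)
  · exact gap_lt_pos a lam ha hlam u hC2 hode z₁ z₂ hz h1 h2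
      (hsign u hucont hne hmidpos)

lemma forward (T a : ℝ) (hT : 0 < T) (ha : 0 < a) (k : ℕ) (hk : 1 ≤ k) (lam : ℝ)
    (u : ℝ → ℝ) (hsol : PeriodicSolC T a lam u) (hz : HasExactZeros T u (2 * k)) :
    lam < sigmaEV T k := by
  obtain ⟨hper, hC2, hode⟩ := hsol
  obtain ⟨hfin, hcard⟩ := hz
  have hkR : (0:ℝ) < k := by exact_mod_cast hk
  have hσ : 0 < sigmaEV T k := by
    have h9 : 0 < 2 * Real.pi * k / T := by positivity
    unfold sigmaEV; positivity
  rcases le_or_gt lam 0 with h0 | h0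
  · linarith
  set n := 2 * k with hndef
  have hn : 0 < n := by omega
  set Z := {t ∈ Set.Ico (0:ℝ) T | u t = 0} with hZdef
  have hcardF : hfin.toFinset.card = n := by
    rw [← Set.ncard_eq_toFinset_card _ hfin]; exact hcard
  set e := hfin.toFinset.orderIsoOfFin hcardF with hedef
  set f : Fin n → ℝ := fun i => (e i : ℝ) with hfdef
  have hfmono : StrictMono f := fun i j hij => Subtype.coe_lt_coe.2 (e.strictMono hij)
  have hfmem : ∀ i, f i ∈ Z := fun i => by
    have h9 := (e i).2
    rwa [Set.Finite.mem_toFinset] at h9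
  have hfIco : ∀ i, f i ∈ Set.Ico (0:ℝ) T := fun i => (hfmem i).1
  have hfzero : ∀ i, u (f i) = 0 := fun i => (hfmem i).2
  have hfsurj : ∀ z ∈ Z, ∃ i, f i = z := by
    intro z hzZ
    have hzF : z ∈ hfin.toFinset := by rwa [Set.Finite.mem_toFinset]
    exact ⟨e.symm ⟨z, hzF⟩, by rw [hfdef]; simp⟩
  set g := Real.pi / Real.sqrt lam with hgdef
  have hsl : 0 < Real.sqrt lam := Real.sqrt_pos.2 h0
  have hgpos : 0 < g := by rw [hgdef]; positivity
  -- adjacent gaps are < g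
  have hgap : ∀ (j : ℕ) (hj : j + 1 < n), f ⟨j+1, hj⟩ - f ⟨j, by omega⟩ < g := by
    intro j hj
    have hjlt : (⟨j, by omega⟩ : Fin n) < ⟨j+1, hj⟩ := by simp [Fin.lt_def]
    apply gap_lt a lam ha h0 u hC2 hode _ _ (hfmono hjlt) (hfzero _) (hfzero _)
    intro t ht htz
    have htZ : t ∈ Z :=
      ⟨⟨le_trans (hfIco ⟨j, by omega⟩).1 ht.1.le, lt_trans ht.2 (hfIco ⟨j+1, hj⟩).2⟩, htz⟩
    obtain ⟨l, hl⟩ := hfsurj t htZ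
    have h1 : (⟨j, by omega⟩ : Fin n) < l := hfmono.lt_iff_lt.1 (by rw [hl]; exact ht.1)
    have h2 : l < (⟨j+1, hj⟩ : Fin n) := hfmono.lt_iff_lt.1 (by rw [hl]; exact ht.2)
    simp only [Fin.lt_def, Fin.val_mk] at h1 h2
    omega
  -- chain bound
  have hchain : ∀ (j : ℕ) (hj : j < n), f ⟨j, hj⟩ ≤ f ⟨0, hn⟩ + j * g := by
    intro j
    induction j with
    | zero => intro hj; simp
    | succ p ih =>
        intro hj
        have hp : p < n := by omega
        have h1 := hgap p hj
        have h2 := ih hp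
        push_cast
        have h3 : f ⟨p, by omega⟩ = f ⟨p, hp⟩ := rfl
        rw [h3] at h1
        linarith
  -- wrap-around gap
  have hlast : n - 1 < n := by omega
  have hwrap : (f ⟨0, hn⟩ + T) - f ⟨n-1, hlast⟩ < g := by
    apply gap_lt a lam ha h0 u hC2 hode
    · have h4 := (hfIco ⟨n-1, hlast⟩).2
      have h5 := (hfIco ⟨0, hn⟩).1
      linarith
    · exact hfzero _
    · rw [hper (f ⟨0, hn⟩)]
      exact hfzero _
    · intro t ht htz
      rcases lt_or_ge t T with hTt | hTt
      · have htZ : t ∈ Z := ⟨⟨le_trans (hfIco ⟨n-1, hlast⟩).1 ht.1.le, hTt⟩, htz⟩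
        obtain ⟨l, hl⟩ := hfsurj t htZ
        have h1 : (⟨n-1, hlast⟩ : Fin n) < l := hfmono.lt_iff_lt.1 (by rw [hl]; exact ht.1)
        simp only [Fin.lt_def, Fin.val_mk] at h1
        have h2 := l.2
        omega
      · have hzt : u (t - T) = 0 := by
          have h6 := hper (t - T)
          rw [sub_add_cancel] at h6
          rw [← h6]
          exact htz
        have htZ : t - T ∈ Z := by
          refine ⟨⟨by linarith, ?_⟩, hzt⟩
          have h7 := (hfIco ⟨0, hn⟩).2
          have h8 := ht.2
          linarith
        obtain ⟨l, hl⟩ := hfsurj _ htZ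
        have h1 : l < (⟨0, hn⟩ : Fin n) := by
          apply hfmono.lt_iff_lt.1
          rw [hl]
          have h8 := ht.2
          linarith
        simp only [Fin.lt_def, Fin.val_mk] at h1
        omega
  -- conclude
  have hcast : ((n - 1 : ℕ) : ℝ) = (n : ℝ) - 1 := by
    have := Nat.cast_sub (by omega : 1 ≤ n) (R := ℝ)
    simpa using this
  have hTlt : T < n * g := by
    have h1 := hchain (n-1) hlast
    rw [hcast] at h1
    linarith
  have hslT : Real.sqrt lam * T < n * Real.pi := by
    have h2 : Real.sqrt lam * T < Real.sqrt lam * (n * g) :=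
      mul_lt_mul_of_pos_left hTlt hsl
    calc Real.sqrt lam * T < Real.sqrt lam * (n * g) := h2
    _ = n * Real.pi := by rw [hgdef]; field_simp
  have hfinal : Real.sqrt lam < 2 * Real.pi * k / T := by
    rw [lt_div_iff₀ hT]
    have hn2 : ((n:ℕ):ℝ) = 2 * k := by rw [hndef]; push_cast; ring
    rw [hn2] at hslT
    linarith
  calc lam = Real.sqrt lam ^ 2 := (Real.sq_sqrt h0.le).symm
  _ < (2 * Real.pi * k / T) ^ 2 := by
      apply pow_lt_pow_left₀ hfinal (Real.sqrt_nonneg _)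
      norm_num
  _ = sigmaEV T k := rfl

end S0

theorem statement0 (T a : ℝ) (hT : 0 < T) (ha : 0 < a) (k : ℕ) (hk : 1 ≤ k) (lam : ℝ) :
    (∃ u : ℝ → ℝ, PeriodicSolC T a lam u ∧ (¬ ∀ t, u t = 0) ∧ HasExactZeros T u (2 * k)) ↔
      lam < sigmaEV T k := by
  constructor
  · rintro ⟨u, hsol, hnt, hz⟩
    exact S0.forward T a hT ha k hk lam u hsol hz
  · intro hlam
    exact S0.backward T a hT ha k hk lam hlam
end
end

section
/- Let T > 0, a > 0 constant, k ≥ 1 an integer, and λ < σ_k := (2πk/T)². Define the energy E_λ(p,q) := q²/2 + λp²/2 + a·p⁴/4. If u₁ and u₂ are nontrivial T-periodic solutions of −u'' = λu + a·u³, each having exactly 2k zeros in [0,T), then the energies coincide: E_λ(u₁(t), u₁'(t)) = E_λ(u₂(s), u₂'(s)) for all t, s ∈ ℝ (both are constant in time and equal), and this common value is strictly positive. -/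
open MeasureTheory Set Filter

noncomputable section

/-- The energy `E_lam(p,q) = q^2/2 + lam*p^2/2 + a*p^4/4`. -/
def Energy (lam a p q : ℝ) : ℝ := q ^ 2 / 2 + lam * p ^ 2 / 2 + a * p ^ 4 / 4

namespace St1

open Metric Topology

def vf (lam a : ℝ) (x : ℝ × ℝ) : ℝ × ℝ := (x.2, -(lam * x.1 + a * x.1 ^ 3))

lemma vf_lip (lam a R : ℝ) : ∃ K : NNReal,
    LipschitzOnWith K (vf lam a) (Metric.closedBall 0 R) := by
  refine ⟨Real.toNNReal (1 + |lam| + 3 * |a| * R ^ 2), ?_⟩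
  have hK : (0:ℝ) ≤ 1 + |lam| + 3 * |a| * R ^ 2 := by positivity
  rw [lipschitzOnWith_iff_dist_le_mul]
  intro x hx y hy
  have hxn : ‖x‖ ≤ R := mem_closedBall_zero_iff.mp hx
  have hyn : ‖y‖ ≤ R := mem_closedBall_zero_iff.mp hy
  have hx1 : |x.1| ≤ R := le_trans (norm_fst_le x) hxn
  have hy1 : |y.1| ≤ R := le_trans (norm_fst_le y) hyn
  have hd1 : dist x.1 y.1 ≤ dist x y := by rw [Prod.dist_eq]; exact le_max_left _ _
  have hd2 : dist x.2 y.2 ≤ dist x y := by rw [Prod.dist_eq]; exact le_max_right _ _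
  have hcoe : ((Real.toNNReal (1 + |lam| + 3 * |a| * R ^ 2)) : ℝ)
      = 1 + |lam| + 3 * |a| * R ^ 2 := Real.coe_toNNReal _ hK
  rw [Prod.dist_eq]
  rw [hcoe]
  have hdnn : (0:ℝ) ≤ dist x y := dist_nonneg
  refine max_le ?_ ?_
  · simp only [vf]
    calc dist x.2 y.2 ≤ dist x y := hd2
    _ ≤ (1 + |lam| + 3 * |a| * R ^ 2) * dist x y := by nlinarith [mul_nonneg (by positivity : (0:ℝ) ≤ |lam| + 3 * |a| * R ^ 2) hdnn]
  · simp only [vf, Real.dist_eq]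
    have key : |-(lam * x.1 + a * x.1 ^ 3) - -(lam * y.1 + a * y.1 ^ 3)|
        ≤ (|lam| + 3 * |a| * R ^ 2) * |x.1 - y.1| := by
      have h1 : -(lam * x.1 + a * x.1 ^ 3) - -(lam * y.1 + a * y.1 ^ 3)
          = -(lam * (x.1 - y.1)) - a * ((x.1 - y.1) * (x.1^2 + x.1*y.1 + y.1^2)) := by ring
      rw [h1]
      refine le_trans (abs_sub _ _) ?_
      rw [abs_neg, abs_mul, abs_mul, abs_mul]
      have h2 : |x.1^2 + x.1*y.1 + y.1^2| ≤ 3 * R^2 := by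
        have := abs_mul x.1 y.1
        have h3 : |x.1*y.1| ≤ R^2 := by
          rw [abs_mul]; nlinarith [abs_nonneg x.1, abs_nonneg y.1]
        have h4 : x.1^2 ≤ R^2 := by nlinarith [abs_nonneg x.1, neg_abs_le x.1, le_abs_self x.1]
        have h5 : y.1^2 ≤ R^2 := by nlinarith [abs_nonneg y.1, neg_abs_le y.1, le_abs_self y.1]
        have := neg_abs_le (x.1*y.1)
        have := le_abs_self (x.1*y.1)
        rw [abs_le]; constructor <;> nlinarith
      nlinarith [abs_nonneg (x.1 - y.1), abs_nonneg a, mul_le_mul_of_nonneg_left h2 (abs_nonneg a)]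
    refine le_trans key ?_
    have : |x.1 - y.1| = dist x.1 y.1 := rfl
    rw [this]
    nlinarith [abs_nonneg lam, abs_nonneg a, sq_nonneg R, dist_nonneg (x := x.1) (y := y.1)]


def SolEq (lam a : ℝ) (u : ℝ → ℝ) : Prop :=
  ContDiff ℝ 2 u ∧ ∀ t, deriv (deriv u) t = -(lam * u t + a * u t ^ 3)


lemma sol_diff {lam a : ℝ} {u : ℝ → ℝ} (hu : SolEq lam a u) : Differentiable ℝ u :=
  hu.1.differentiable (by norm_num)

lemma sol_deriv_contDiff {lam a : ℝ} {u : ℝ → ℝ} (hu : SolEq lam a u) :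
    ContDiff ℝ 1 (deriv u) := by
  have h := hu.1
  have h2 : ContDiff ℝ ((1:ℕ)+1) u := by exact_mod_cast h
  rw [contDiff_succ_iff_deriv] at h2
  exact h2.2.2

lemma sol_diff2 {lam a : ℝ} {u : ℝ → ℝ} (hu : SolEq lam a u) :
    Differentiable ℝ (deriv u) :=
  (sol_deriv_contDiff hu).differentiable (by norm_num)

/-- Global uniqueness for the 2nd order ODE, given boundedness of both trajectories. -/
lemma sol_uniq {lam a : ℝ} {u v : ℝ → ℝ} (hu : SolEq lam a u) (hv : SolEq lam a v)
    {R : ℝ} (hub : ∀ t, |u t| ≤ R ∧ |deriv u t| ≤ R ∧ |v t| ≤ R ∧ |deriv v t| ≤ R)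
    (t₀ : ℝ) (h0 : u t₀ = v t₀) (h1 : deriv u t₀ = deriv v t₀) : ∀ t, u t = v t := by
  obtain ⟨K, hK⟩ := vf_lip lam a R
  set F : ℝ → ℝ × ℝ := fun t => (u t, deriv u t) with hF
  set G : ℝ → ℝ × ℝ := fun t => (v t, deriv v t) with hG
  have hFd : ∀ t, HasDerivAt F ((F t).2, -(lam * (F t).1 + a * (F t).1 ^ 3)) t := by
    intro t
    have h1 : HasDerivAt u (deriv u t) t := (sol_diff hu t).hasDerivAt
    have h2 : HasDerivAt (deriv u) (deriv (deriv u) t) t := (sol_diff2 hu t).hasDerivAt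
    rw [hu.2 t] at h2
    exact h1.prodMk h2
  have hGd : ∀ t, HasDerivAt G ((G t).2, -(lam * (G t).1 + a * (G t).1 ^ 3)) t := by
    intro t
    have h1 : HasDerivAt v (deriv v t) t := (sol_diff hv t).hasDerivAt
    have h2 : HasDerivAt (deriv v) (deriv (deriv v) t) t := (sol_diff2 hv t).hasDerivAt
    rw [hv.2 t] at h2
    exact h1.prodMk h2
  have hFm : ∀ t, F t ∈ Metric.closedBall (0 : ℝ × ℝ) R := by
    intro t
    rw [mem_closedBall_zero_iff, Prod.norm_def]
    exact max_le ((hub t).1) ((hub t).2.1)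
  have hGm : ∀ t, G t ∈ Metric.closedBall (0 : ℝ × ℝ) R := by
    intro t
    rw [mem_closedBall_zero_iff, Prod.norm_def]
    exact max_le ((hub t).2.2.1) ((hub t).2.2.2)
  have key : ∀ t, F t = G t := by
    intro t
    rcases eq_or_ne t t₀ with rfl | hne
    · simp [hF, hG, h0, h1]
    · have hab : t₀ ∈ Ioo (min t t₀ - 1) (max t t₀ + 1) := by
        constructor
        · have := min_le_right t t₀; linarith
        · have := le_max_right t t₀; linarith
      have := ODE_solution_unique_of_mem_Icc
        (v := fun _ x => (x.2, -(lam * x.1 + a * x.1 ^ 3)))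
        (s := fun _ => Metric.closedBall (0 : ℝ × ℝ) R)
        (fun _ _ => hK) hab
        (Continuous.continuousOn ((sol_diff hu).continuous.prodMk (sol_diff2 hu).continuous))
        (fun s _ => hFd s) (fun s _ => hFm s)
        (Continuous.continuousOn ((sol_diff hv).continuous.prodMk (sol_diff2 hv).continuous))
        (fun s _ => hGd s) (fun s _ => hGm s)
        (by simp [hF, hG, h0, h1])
      apply this
      constructor
      · have := min_le_left t t₀; linarith
      · have := le_max_left t t₀; linarith
  intro t
  have := key t
  exact congrArg Prod.fst this


variable {lam a : ℝ} {u : ℝ → ℝ}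

lemma SolEq.neg (hu : SolEq lam a u) : SolEq lam a (fun t => -u t) := by
  have hd : deriv (fun t => -u t) = fun t => -deriv u t := by
    funext t; exact deriv.neg
  refine ⟨hu.1.neg, fun t => ?_⟩
  rw [hd]
  have : deriv (fun t => -deriv u t) t = -deriv (deriv u) t := deriv.neg
  rw [this, hu.2 t]
  ring

lemma SolEq.shift (hu : SolEq lam a u) (c : ℝ) : SolEq lam a (fun t => u (t + c)) := by
  have hd : deriv (fun t => u (t + c)) = fun t => deriv u (t + c) := by
    funext t; exact deriv_comp_add_const u c t
  refine ⟨hu.1.comp ((contDiff_id.add contDiff_const : ContDiff ℝ 2 (fun t : ℝ => t + c))), fun t => ?_⟩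
  rw [hd]
  have : deriv (fun t => deriv u (t + c)) t = deriv (deriv u) (t + c) := deriv_comp_add_const (deriv u) c t
  rw [this, hu.2 (t + c)]

lemma SolEq.reflect (hu : SolEq lam a u) (c : ℝ) : SolEq lam a (fun t => u (c - t)) := by
  have hd : deriv (fun t => u (c - t)) = fun t => -deriv u (c - t) := by
    funext t; exact deriv_comp_const_sub u c t
  refine ⟨hu.1.comp ((contDiff_const.sub contDiff_id : ContDiff ℝ 2 (fun t : ℝ => c - t))), fun t => ?_⟩
  rw [hd]
  have h2 : deriv (fun t => -deriv u (c - t)) t = -deriv (fun t => deriv u (c - t)) t :=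
    deriv.neg
  have h3 : deriv (fun t => deriv u (c - t)) t = -deriv (deriv u) (c - t) :=
    deriv_comp_const_sub (deriv u) c t
  rw [h2, h3, hu.2 (c - t)]
  ring

lemma deriv_reflect (hu : Differentiable ℝ u) (c t : ℝ) :
    deriv (fun t => u (c - t)) t = -deriv u (c - t) := deriv_comp_const_sub u c t

lemma deriv_shift (c t : ℝ) : deriv (fun t => u (t + c)) t = deriv u (t + c) :=
  deriv_comp_add_const u c t

lemma deriv_neg' (t : ℝ) : deriv (fun t => -u t) t = -deriv u t := deriv.neg

/-- a T-periodic C¹... actually solution: u and deriv u are bounded by a common R. -/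
lemma SolEq.bounded (hu : SolEq lam a u) {T : ℝ} (hT : 0 < T) (hp : Function.Periodic u T) :
    ∃ R : ℝ, 0 ≤ R ∧ ∀ t, |u t| ≤ R ∧ |deriv u t| ≤ R := by
  have hpd : Function.Periodic (deriv u) T := by
    intro t
    have : deriv (fun s => u (s + T)) t = deriv u (t + T) := deriv_comp_add_const u T t
    rw [← this]
    congr 1
    funext s; exact hp s
  have hc : Continuous fun t => |u t| + |deriv u t| := by
    have h1 := hu.1.continuous
    have h2 := ((contDiff_succ_iff_deriv (n := 1)).mp (by exact_mod_cast hu.1)).2.2.continuous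
    exact (h1.abs.add h2.abs)
  obtain ⟨C, hC⟩ := (isCompact_Icc (a := (0:ℝ)) (b := T)).exists_bound_of_continuousOn
    hc.continuousOn
  refine ⟨max C 0, le_max_right _ _, fun t => ?_⟩
  obtain ⟨s, hs, hus⟩ := hp.exists_mem_Ico₀ hT t
  obtain ⟨s', hs', hus'⟩ := hpd.exists_mem_Ico₀ hT t
  have h1 := hC s (Ico_subset_Icc_self hs)
  have h2 := hC s' (Ico_subset_Icc_self hs')
  rw [Real.norm_eq_abs] at h1 h2
  have k1 : |u s| + |deriv u s| ≤ C := le_trans (le_abs_self _) h1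
  have k2 : |u s'| + |deriv u s'| ≤ C := le_trans (le_abs_self _) h2
  constructor
  · rw [hus]
    refine le_trans ?_ (le_max_left C 0)
    have := abs_nonneg (deriv u s); linarith
  · rw [hus']
    refine le_trans ?_ (le_max_left C 0)
    have := abs_nonneg (u s'); linarith

/-- Energy conservation. -/
lemma SolEq.energy_const (hu : SolEq lam a u) (t s : ℝ) :
    deriv u t ^ 2 / 2 + lam * u t ^ 2 / 2 + a * u t ^ 4 / 4
      = deriv u s ^ 2 / 2 + lam * u s ^ 2 / 2 + a * u s ^ 4 / 4 := by
  set f : ℝ → ℝ := fun t => deriv u t ^ 2 / 2 + lam * u t ^ 2 / 2 + a * u t ^ 4 / 4 with hf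
  have hder : ∀ x, HasDerivAt f 0 x := by
    intro x
    have h1 : HasDerivAt u (deriv u x) x := (hu.1.differentiable (by norm_num) x).hasDerivAt
    have h2 : HasDerivAt (deriv u) (deriv (deriv u) x) x :=
      (((contDiff_succ_iff_deriv (n := 1)).mp (by exact_mod_cast hu.1)).2.2.differentiable
        (by norm_num) x).hasDerivAt
    have H := (((h2.pow 2).div_const 2).add
      (((h1.pow 2).const_mul lam).div_const 2)).add (((h1.pow 4).const_mul a).div_const 4)
    refine H.congr_deriv ?_
    rw [hu.2 x]
    push_cast
    ring
  have hd0 : ∀ x, deriv f x = 0 := fun x => (hder x).deriv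
  have hdf : Differentiable ℝ f := fun x => (hder x).differentiableAt
  exact is_const_of_deriv_eq_zero hdf hd0 t s


lemma eventually_pos_right {w : ℝ → ℝ} {d z : ℝ} (hw : HasDerivAt w d z) (h0 : w z = 0)
    (hd : 0 < d) : ∀ᶠ t in 𝓝[>] z, 0 < w t := by
  have hs := hasDerivAt_iff_tendsto_slope.mp hw
  have hev : ∀ᶠ t in 𝓝[≠] z, 0 < slope w z t := hs.eventually (lt_mem_nhds hd)
  have hmono : 𝓝[>] z ≤ 𝓝[≠] z := nhdsWithin_mono _ fun t ht => ne_of_gt ht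
  filter_upwards [hmono hev, self_mem_nhdsWithin] with t hslope ht
  have h1 : slope w z t = w t / (t - z) := by
    rw [slope_def_field]; rw [h0]; simp
  rw [h1] at hslope
  have h2 : 0 < t - z := sub_pos.mpr ht
  rcases div_pos_iff.mp hslope with ⟨h3, _⟩ | ⟨_, h4⟩
  · exact h3
  · linarith

lemma deriv_nonpos_left {w : ℝ → ℝ} {d z c : ℝ} (hw : HasDerivAt w d z) (h0 : w z = 0)
    (hc : c < z) (hpos : ∀ t ∈ Ioo c z, 0 < w t) : d ≤ 0 := by
  have hs := hasDerivAt_iff_tendsto_slope.mp hw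
  have hmono : 𝓝[<] z ≤ 𝓝[≠] z := nhdsWithin_mono _ fun t ht => ne_of_lt ht
  have hs' : Tendsto (slope w z) (𝓝[<] z) (𝓝 d) := hs.mono_left hmono
  refine le_of_tendsto hs' ?_
  filter_upwards [Ioo_mem_nhdsLT_of_mem ⟨hc, le_refl z⟩] with t ht
  have h1 : slope w z t = w t / (t - z) := by rw [slope_def_field, h0]; simp
  rw [h1]
  have h2 : t - z < 0 := sub_neg.mpr ht.2
  exact le_of_lt (div_neg_of_pos_of_neg (hpos t ht) h2)


lemma zeros_window_finite {T : ℝ} (hT : 0 < T) (hp : Function.Periodic u T)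
    (hfin : {t ∈ Ico (0:ℝ) T | u t = 0}.Finite) (c : ℝ) :
    {t ∈ Ico c (c + T) | u t = 0}.Finite := by
  set φ : ℝ → ℝ := fun t => t - ⌊t / T⌋ * T with hφ
  have hφmem : ∀ t, φ t ∈ Ico (0:ℝ) T := by
    intro t
    constructor
    · have h1 : (⌊t / T⌋ : ℝ) ≤ t / T := Int.floor_le _
      have h2 : (⌊t / T⌋ : ℝ) * T ≤ t / T * T := mul_le_mul_of_nonneg_right h1 (le_of_lt hT)
      rw [div_mul_cancel₀ _ (ne_of_gt hT)] at h2
      simp only [hφ]; linarith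
    · have h1 : t / T < ⌊t / T⌋ + 1 := Int.lt_floor_add_one _
      have h2 : t / T * T < ((⌊t / T⌋:ℝ) + 1) * T := mul_lt_mul_of_pos_right h1 hT
      rw [div_mul_cancel₀ _ (ne_of_gt hT)] at h2
      simp only [hφ]; linarith
  have hφval : ∀ t, u (φ t) = u t := by
    intro t
    simp only [hφ]
    exact hp.sub_int_mul_eq ⌊t / T⌋
  have hinj : InjOn φ (Ico c (c + T)) := by
    intro t₁ h₁ t₂ h₂ heq
    simp only [hφ] at heq
    have hdiff : t₁ - t₂ = ((⌊t₁ / T⌋ - ⌊t₂ / T⌋ : ℤ) : ℝ) * T := by push_cast; linarith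
    set m : ℤ := ⌊t₁ / T⌋ - ⌊t₂ / T⌋ with hm
    have hb1 : t₁ - t₂ < T := by have := h₁.2; have := h₂.1; linarith
    have hb2 : -T < t₁ - t₂ := by have := h₁.1; have := h₂.2; linarith
    have hm1 : (m:ℝ) * T < 1 * T := by rw [← hdiff]; linarith
    have hm2 : (-1:ℝ) * T < m * T := by rw [← hdiff]; linarith
    have hmlt : (m:ℝ) < 1 := lt_of_mul_lt_mul_right hm1 (le_of_lt hT)
    have hmgt : (-1:ℝ) < (m:ℝ) := lt_of_mul_lt_mul_right hm2 (le_of_lt hT)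
    have : m = 0 := by
      have l1 : m < 1 := by exact_mod_cast hmlt
      have l2 : -1 < m := by exact_mod_cast hmgt
      omega
    rw [this] at hdiff
    push_cast at hdiff
    linarith
  refine Set.Finite.of_finite_image (f := φ) ?_ (hinj.mono (fun t ht => ht.1))
  refine hfin.subset ?_
  rintro s ⟨t, ⟨ht, htz⟩, rfl⟩
  exact ⟨hφmem t, by rw [hφval t]; exact htz⟩


lemma normalized_structure {T E : ℝ} (hT : 0 < T) (hw : SolEq lam a w)
    (hp : Function.Periodic w T)
    (hfin : {t ∈ Ico (0:ℝ) T | w t = 0}.Finite) (h0 : w 0 = 0) (hd0 : 0 < deriv w 0)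
    (hE : ∀ t, deriv w t ^ 2 + lam * w t ^ 2 + a * w t ^ 4 / 2 = 2 * E) :
    ∃ g : ℝ, 0 < g ∧ g ≤ T ∧ ({t : ℝ | w t = 0} = {t : ℝ | ∃ j : ℤ, t = j * g}) ∧
      (∀ t, w (g - t) = w t) ∧ (∀ t ∈ Ioo 0 g, 0 < w t) ∧
      (∀ t ∈ Ico 0 (g/2), 0 < deriv w t) := by
  obtain ⟨R, hR0, hR⟩ := hw.bounded hT hp
  have U : ∀ v : ℝ → ℝ, SolEq lam a v → (∀ t, |v t| ≤ R ∧ |deriv v t| ≤ R) →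
      ∀ t₀ : ℝ, w t₀ = v t₀ → deriv w t₀ = deriv v t₀ → ∀ t, w t = v t := by
    intro v hv hb t₀ e0 e1
    exact sol_uniq hw hv (fun t => ⟨(hR t).1, (hR t).2, (hb t).1, (hb t).2⟩) t₀ e0 e1
  have hwc : Continuous w := hw.1.continuous
  have hdc : Continuous (deriv w) := (sol_deriv_contDiff hw).continuous
  have hda : ∀ t, HasDerivAt w (deriv w t) t := fun t => (sol_diff hw t).hasDerivAt
  -- the set of zeros in `(0, T]` is finite and contains `T`
  set S : Set ℝ := {t ∈ Ioc (0:ℝ) T | w t = 0} with hS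
  have hwT : w T = 0 := by have := hp 0; rw [zero_add] at this; rw [this, h0]
  have hTS : T ∈ S := ⟨⟨hT, le_refl T⟩, hwT⟩
  have hSfin : S.Finite := by
    refine (hfin.union (Set.finite_singleton T)).subset ?_
    rintro t ⟨⟨ht0, htT⟩, htz⟩
    rcases lt_or_eq_of_le htT with h | h
    · exact Or.inl ⟨⟨le_of_lt ht0, h⟩, htz⟩
    · exact Or.inr (by simp [h])
  have hSne : hSfin.toFinset.Nonempty := ⟨T, hSfin.mem_toFinset.mpr hTS⟩
  set g : ℝ := hSfin.toFinset.min' hSne with hgdef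
  have hgS : g ∈ S := hSfin.mem_toFinset.mp (hSfin.toFinset.min'_mem hSne)
  have hgmin : ∀ y ∈ S, g ≤ y := fun y hy =>
    hSfin.toFinset.min'_le y (hSfin.mem_toFinset.mpr hy)
  have hg0 : 0 < g := hgS.1.1
  have hgT : g ≤ T := hgS.1.2
  have hwg : w g = 0 := hgS.2
  -- no zeros in (0, g)
  have hnoz : ∀ y ∈ Ioo (0:ℝ) g, w y ≠ 0 := by
    intro y hy hz
    have : y ∈ S := ⟨⟨hy.1, le_trans (le_of_lt hy.2) hgT⟩, hz⟩
    exact absurd (hgmin y this) (not_le.mpr hy.2)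
  -- positivity on (0, g)
  have pos1 : ∀ t ∈ Ioo (0:ℝ) g, 0 < w t := by
    have hev : ∀ᶠ t in 𝓝[>] (0:ℝ), 0 < w t := by
      have := eventually_pos_right (hda 0) h0 hd0
      exact this
    obtain ⟨ub, hub, hsub⟩ := mem_nhdsGT_iff_exists_Ioc_subset.mp hev
    intro t ht
    rcases lt_trichotomy (w t) 0 with hneg | hzero | hposi
    · exfalso
      rcases le_or_gt t ub with hcase | hcase
      · exact absurd (hsub ⟨ht.1, hcase⟩) (not_lt.mpr (le_of_lt hneg))
      · have hucont : ContinuousOn w (Icc ub t) := hwc.continuousOn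
        have h0mem : (0:ℝ) ∈ Icc (w t) (w ub) :=
          ⟨le_of_lt hneg, le_of_lt (hsub ⟨hub, le_refl ub⟩)⟩
        obtain ⟨c, hc, hcz⟩ := intermediate_value_Icc' (le_of_lt hcase) hucont h0mem
        refine hnoz c ⟨lt_of_lt_of_le hub hc.1, lt_of_le_of_lt hc.2 ht.2⟩ hcz
    · exact absurd hzero (hnoz t ht)
    · exact hposi
  -- derivative at g
  have hdgle : deriv w g ≤ 0 := deriv_nonpos_left (hda g) hwg hg0 pos1
  have hsq : deriv w g ^ 2 = deriv w 0 ^ 2 := by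
    have e1 := hE g; have e2 := hE 0
    rw [hwg] at e1; rw [h0] at e2
    ring_nf at e1 e2 ⊢
    linarith
  have hdg : deriv w g = -deriv w 0 := by
    have hfac : (deriv w g + deriv w 0) * (deriv w g - deriv w 0) = 0 := by ring_nf; linarith [hsq]
    rcases mul_eq_zero.mp hfac with h | h
    · linarith
    · exfalso; have : deriv w g = deriv w 0 := by linarith
      linarith
  -- anti-periodicity  w (t + g) = -w t
  have antiper : ∀ t, w (t + g) = -w t := by
    have key : ∀ t, w t = -(w (t + g)) := by
      refine U (fun t => -(w (t + g))) (SolEq.neg (hw.shift g)) ?_ 0 ?_ ?_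
      · intro t
        have hder : deriv (fun t => -(w (t + g))) t = -(deriv w (t + g)) := by
          rw [deriv.fun_neg, deriv_comp_add_const w g t]
        constructor
        · rw [abs_neg]; exact (hR (t + g)).1
        · rw [hder, abs_neg]; exact (hR (t + g)).2
      · simp [h0, hwg]
      · have hder : deriv (fun t => -(w (t + g))) 0 = -(deriv w (0 + g)) := by
          rw [deriv.fun_neg, deriv_comp_add_const w g 0]
        rw [hder, zero_add, hdg]; ring
    intro t
    have := key t
    linarith [this]
  -- oddness
  have odd : ∀ t, w (-t) = -w t := by
    have key : ∀ t, w t = -(w (0 - t)) := by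
      refine U (fun t => -(w (0 - t))) (SolEq.neg (hw.reflect 0)) ?_ 0 ?_ ?_
      · intro t
        have hder : deriv (fun t => -(w (0 - t))) t = deriv w (0 - t) := by
          rw [deriv.fun_neg, deriv_comp_const_sub w 0 t]; ring
        constructor
        · rw [abs_neg]; exact (hR (0 - t)).1
        · rw [hder]; exact (hR (0 - t)).2
      · simp [h0]
      · have hder : deriv (fun t => -(w (0 - t))) 0 = deriv w (0 - 0) := by
          rw [deriv.fun_neg, deriv_comp_const_sub w 0 0]; ring
        rw [hder]; norm_num
    intro t
    have := key t
    rw [zero_sub] at this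
    linarith
  -- squared shift identity
  have sqshift : ∀ j : ℤ, ∀ t, w (t + j * g) ^ 2 = w t ^ 2 := by
    intro j
    induction j using Int.induction_on with
    | zero => intro t; norm_num
    | succ n ih =>
      intro t
      have h1 : t + ((n:ℤ) + 1 : ℤ) * g = (t + n * g) + g := by push_cast; ring
      rw [h1, antiper (t + n * g)]
      rw [neg_sq]
      exact ih t
    | pred n ih =>
      intro t
      have h1 : t + (-(n:ℤ) - 1 : ℤ) * g + g = t + (-(n:ℤ) : ℤ) * g := by push_cast; ring
      have h2 := antiper (t + (-(n:ℤ) - 1 : ℤ) * g)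
      rw [h1] at h2
      have h3 : w (t + (-(n:ℤ) - 1 : ℤ) * g) ^ 2 = w (t + (-(n:ℤ) : ℤ) * g) ^ 2 := by
        rw [h2]; ring
      rw [h3]
      exact ih t
  -- zero set
  have Zset : {t : ℝ | w t = 0} = {t : ℝ | ∃ j : ℤ, t = j * g} := by
    ext y
    simp only [mem_setOf_eq]
    constructor
    · intro hy
      set j : ℤ := ⌊y / g⌋ with hj
      set r : ℝ := y - j * g with hr
      have hry : r + j * g = y := by rw [hr]; ring
      have hr0 : 0 ≤ r := by
        rw [hr]
        have := Int.floor_le (y / g)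
        have h2 : (j:ℝ) * g ≤ y / g * g := by
          apply mul_le_mul_of_nonneg_right this (le_of_lt hg0)
        rw [div_mul_cancel₀ _ (ne_of_gt hg0)] at h2
        linarith
      have hrg : r < g := by
        rw [hr]
        have := Int.lt_floor_add_one (y / g)
        have h2 : y / g * g < ((j:ℝ) + 1) * g := by
          apply mul_lt_mul_of_pos_right this hg0
        rw [div_mul_cancel₀ _ (ne_of_gt hg0)] at h2
        linarith
      have hwr : w r ^ 2 = 0 := by
        have := sqshift j r
        rw [hry] at this
        rw [← this, hy]; norm_num
      have hwr0 : w r = 0 := by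
        exact pow_eq_zero_iff (by norm_num) |>.mp hwr
      rcases eq_or_lt_of_le hr0 with h | h
      · exact ⟨j, by rw [← hry, ← h]; ring⟩
      · exact absurd hwr0 (hnoz r ⟨h, hrg⟩)
    · rintro ⟨j, rfl⟩
      have := sqshift j 0
      rw [zero_add, h0] at this
      norm_num at this
      exact this
  -- symmetry about g/2
  have sym : ∀ t, w (g - t) = w t := by
    intro t
    have h1 : g - t = -t + g := by ring
    rw [h1, antiper (-t), odd t]
    ring
  -- no critical point except midpoint
  have crit : ∀ c ∈ Ioo (0:ℝ) g, c ≠ g / 2 → deriv w c ≠ 0 := by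
    intro c hc hcm hdc0
    have key : ∀ t, w t = w (2 * c - t) := by
      refine U (fun t => w (2 * c - t)) (hw.reflect (2 * c)) ?_ c ?_ ?_
      · intro t
        have hder : deriv (fun t => w (2 * c - t)) t = -(deriv w (2 * c - t)) :=
          deriv_comp_const_sub w (2 * c) t
        constructor
        · exact (hR (2 * c - t)).1
        · rw [hder, abs_neg]; exact (hR (2 * c - t)).2
      · congr 1; ring
      · have hder : deriv (fun t => w (2 * c - t)) c = -(deriv w (2 * c - c)) :=
          deriv_comp_const_sub w (2 * c) c
        rw [hder]
        have : 2 * c - c = c := by ring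
        rw [this, hdc0]; ring
    have h2c : w (2 * c) = 0 := by
      have := key 0
      rw [h0, sub_zero] at this
      exact this.symm
    have : (2 : ℝ) * c ∈ {t : ℝ | ∃ j : ℤ, t = j * g} := by rw [← Zset]; exact h2c
    obtain ⟨j, hjc⟩ := this
    have hj1 : (0:ℝ) < j * g := by rw [← hjc]; linarith [hc.1]
    have hj2 : (j:ℝ) * g < 2 * g := by rw [← hjc]; linarith [hc.2]
    have hjpos : 0 < j := by
      by_contra h
      push_neg at h
      have : (j:ℝ) ≤ 0 := by exact_mod_cast h
      nlinarith
    have hjlt : j < 2 := by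
      by_contra h
      push_neg at h
      have : (2:ℝ) ≤ j := by exact_mod_cast h
      nlinarith
    have : j = 1 := by omega
    rw [this] at hjc
    apply hcm
    push_cast at hjc
    linarith
  -- derivative positive on [0, g/2)
  have dpos : ∀ t ∈ Ico (0:ℝ) (g/2), 0 < deriv w t := by
    intro t ht
    rcases eq_or_lt_of_le ht.1 with h | h
    · rw [← h]; exact hd0
    · by_contra hle
      push_neg at hle
      have h0mem : (0:ℝ) ∈ Icc (deriv w t) (deriv w 0) := ⟨hle, le_of_lt hd0⟩
      obtain ⟨c, hc, hcz⟩ := intermediate_value_Icc' (le_of_lt h) hdc.continuousOn h0mem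
      have hc0 : c ≠ 0 := by
        intro hc0; rw [hc0] at hcz; linarith
      have hcIoo : c ∈ Ioo (0:ℝ) g := by
        constructor
        · exact lt_of_le_of_ne hc.1 (Ne.symm hc0)
        · have : c ≤ t := hc.2
          linarith [ht.2, hg0]
      have hcm : c ≠ g / 2 := by
        intro hcm
        rw [hcm] at hc
        linarith [hc.2, ht.2]
      exact crit c hcIoo hcm hcz
  exact ⟨g, hg0, hgT, Zset, sym, pos1, dpos⟩


lemma count_lattice {g : ℝ} (hg : 0 < g) (z : ℝ) (N : ℕ) :
    ({t : ℝ | t ∈ Ico (0:ℝ) ((N:ℝ) * g) ∧ ∃ j : ℤ, t = z + j * g}).ncard = N := by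
  set j₀ : ℤ := ⌈-z / g⌉ with hj₀
  have key1 : 0 ≤ z + j₀ * g := by
    have := Int.le_ceil (-z / g)
    have h2 : -z / g * g ≤ (j₀:ℝ) * g := mul_le_mul_of_nonneg_right this (le_of_lt hg)
    rw [div_mul_cancel₀ _ (ne_of_gt hg)] at h2
    linarith
  have key2 : z + ((j₀:ℝ) - 1) * g < 0 := by
    have := Int.ceil_lt_add_one (-z / g)
    have h2 : ((j₀:ℝ)) * g < (-z / g + 1) * g := by
      apply mul_lt_mul_of_pos_right ?_ hg
      exact_mod_cast this
    rw [add_mul, div_mul_cancel₀ _ (ne_of_gt hg)] at h2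
    linarith
  have hset : {t : ℝ | t ∈ Ico (0:ℝ) ((N:ℝ) * g) ∧ ∃ j : ℤ, t = z + j * g}
      = ↑((Finset.range N).image (fun i : ℕ => z + ((j₀:ℝ) + i) * g)) := by
    ext t
    simp only [Finset.coe_image, Finset.coe_range, mem_image, mem_Iio, mem_setOf_eq]
    constructor
    · rintro ⟨⟨ht0, htN⟩, j, rfl⟩
      have hjge : j₀ ≤ j := by
        by_contra hcon
        push_neg at hcon
        have h1 : j ≤ j₀ - 1 := by omega
        have h2 : (j:ℝ) ≤ (j₀:ℝ) - 1 := by exact_mod_cast h1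
        have h3 : (j:ℝ) * g ≤ ((j₀:ℝ) - 1) * g := mul_le_mul_of_nonneg_right h2 (le_of_lt hg)
        linarith
      have hjlt : j - j₀ < N := by
        by_contra hcon
        push_neg at hcon
        have h2 : ((N:ℝ)) ≤ ((j:ℝ) - (j₀:ℝ)) := by exact_mod_cast hcon
        have h3 : (N:ℝ) * g ≤ ((j:ℝ) - (j₀:ℝ)) * g := mul_le_mul_of_nonneg_right h2 (le_of_lt hg)
        nlinarith
      refine ⟨(j - j₀).toNat, ?_, ?_⟩
      · have : ((j - j₀).toNat : ℤ) = j - j₀ := Int.toNat_of_nonneg (by omega)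
        omega
      · have h4 : (((j - j₀).toNat : ℕ) : ℝ) = (j:ℝ) - (j₀:ℝ) := by
          have : ((j - j₀).toNat : ℤ) = j - j₀ := Int.toNat_of_nonneg (by omega)
          exact_mod_cast this
        rw [h4]; ring
    · rintro ⟨i, hiN, rfl⟩
      refine ⟨⟨?_, ?_⟩, j₀ + i, by push_cast; ring⟩
      · have : (0:ℝ) ≤ (i:ℝ) * g := by positivity
        nlinarith
      · have h1 : ((i:ℝ) + 1) ≤ (N:ℝ) := by exact_mod_cast Nat.succ_le_of_lt hiN
        nlinarith
  rw [hset, Set.ncard_coe_finset]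
  rw [Finset.card_image_of_injective _ ?_, Finset.card_range]
  intro i i' hii
  simp only at hii
  have h : ((j₀:ℝ) + i) * g = ((j₀:ℝ) + i') * g := by linarith
  have h2 := mul_right_cancel₀ (ne_of_gt hg) h
  exact_mod_cast (by linarith : (i:ℝ) = i')


structure Nice (lam a h E : ℝ) (v : ℝ → ℝ) : Prop where
  sol : SolEq lam a v
  zero0 : v 0 = 0
  zeroh : v h = 0
  pos : ∀ t ∈ Ioo 0 h, 0 < v t
  sym : ∀ t, v (h - t) = v t
  energy : ∀ t, deriv v t ^ 2 + lam * v t ^ 2 + a * v t ^ 4 / 2 = 2 * E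
  dpos : ∀ t ∈ Ico 0 (h/2), 0 < deriv v t

lemma Nice.deriv_mid {h E : ℝ} {v : ℝ → ℝ} (H : Nice lam a h E v) : deriv v (h/2) = 0 := by
  have h1 : deriv (fun t => v (h - t)) (h/2) = deriv v (h/2) := by
    have : (fun t => v (h - t)) = v := funext H.sym
    rw [this]
  have h2 : deriv (fun t => v (h - t)) (h/2) = -(deriv v (h - h/2)) :=
    deriv_comp_const_sub v h (h/2)
  have h3 : h - h / 2 = h / 2 := by ring
  rw [h3] at h2
  rw [h2] at h1
  linarith

lemma comparison (ha : 0 < a) {h E₁ E₂ : ℝ} (hh : 0 < h) {v₁ v₂ : ℝ → ℝ}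
    (H₁ : Nice lam a h E₁ v₁) (H₂ : Nice lam a h E₂ v₂) (hlt : E₁ < E₂) : False := by
  have hd₁ : ∀ t, HasDerivAt v₁ (deriv v₁ t) t := fun t => (sol_diff H₁.sol t).hasDerivAt
  have hd₂ : ∀ t, HasDerivAt v₂ (deriv v₂ t) t := fun t => (sol_diff H₂.sol t).hasDerivAt
  have hmid : (0:ℝ) < h / 2 := by linarith
  -- amplitudes
  set M₁ := v₁ (h/2) with hM₁
  set M₂ := v₂ (h/2) with hM₂
  have hM2pos : 0 < M₂ := H₂.pos (h/2) ⟨hmid, by linarith⟩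
  have hMlt : M₁ < M₂ := by
    by_contra hcon
    push_neg at hcon
    have hIVT : M₂ ∈ Icc (v₁ 0) (v₁ (h/2)) := by
      rw [H₁.zero0]; exact ⟨le_of_lt hM2pos, hcon⟩
    obtain ⟨τ, hτ, hvτ⟩ := intermediate_value_Icc (le_of_lt hmid)
      (H₁.sol.1.continuous.continuousOn) hIVT
    have e1 := H₁.energy τ
    have e2 := H₂.energy (h/2)
    rw [hvτ] at e1
    rw [H₂.deriv_mid] at e2
    nlinarith [sq_nonneg (deriv v₁ τ)]
  -- derivative comparison at 0
  have hd0₁ : 0 < deriv v₁ 0 := H₁.dpos 0 ⟨le_refl 0, hmid⟩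
  have hd0₂ : 0 < deriv v₂ 0 := H₂.dpos 0 ⟨le_refl 0, hmid⟩
  have hd0sq : deriv v₁ 0 ^ 2 < deriv v₂ 0 ^ 2 := by
    have e1 := H₁.energy 0
    have e2 := H₂.energy 0
    rw [H₁.zero0] at e1
    rw [H₂.zero0] at e2
    nlinarith
  have hd0 : deriv v₁ 0 < deriv v₂ 0 := by nlinarith
  -- crossing: v₁ < v₂ on (0, h)
  have cross : ∀ t ∈ Ioo (0:ℝ) h, v₁ t < v₂ t := by
    by_contra hcon
    push_neg at hcon
    obtain ⟨t₀, ht₀, hge⟩ := hcon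
    set D : ℝ → ℝ := fun t => v₂ t - v₁ t with hD
    have hDd : ∀ t, HasDerivAt D (deriv v₂ t - deriv v₁ t) t := fun t => (hd₂ t).sub (hd₁ t)
    have hD0 : D 0 = 0 := by rw [hD]; simp [H₁.zero0, H₂.zero0]
    have hDev : ∀ᶠ t in 𝓝[>] (0:ℝ), 0 < D t :=
      eventually_pos_right (hDd 0) hD0 (by linarith)
    obtain ⟨ε, hε, hsub⟩ := mem_nhdsGT_iff_exists_Ioc_subset.mp hDev
    set A : Set ℝ := {t | t ∈ Ioo (0:ℝ) h ∧ v₂ t ≤ v₁ t} with hA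
    have hAne : A.Nonempty := ⟨t₀, ht₀, hge⟩
    have hAbdd : BddBelow A := ⟨0, fun t ht => le_of_lt ht.1.1⟩
    set ts := sInf A with hts
    have htsA : ∀ t ∈ A, ε ≤ t := by
      intro t ht
      by_contra hcon2
      push_neg at hcon2
      have : 0 < D t := hsub ⟨ht.1.1, le_of_lt hcon2⟩
      simp only [hD] at this
      linarith [ht.2]
    have htspos : 0 < ts := lt_of_lt_of_le hε (le_csInf hAne htsA)
    have htsle : ts ≤ t₀ := csInf_le hAbdd ⟨ht₀, hge⟩
    have htslt : ts < h := lt_of_le_of_lt htsle ht₀.2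
    have htsc : v₂ ts ≤ v₁ ts := by
      have h1 : ts ∈ closure A := csInf_mem_closure hAne hAbdd
      have h2 : IsClosed {t : ℝ | v₂ t ≤ v₁ t} :=
        isClosed_le H₂.sol.1.continuous H₁.sol.1.continuous
      have h3 : closure A ⊆ {t : ℝ | v₂ t ≤ v₁ t} :=
        closure_minimal (fun t ht => ht.2) h2
      exact h3 h1
    have hbefore : ∀ t ∈ Ioo (0:ℝ) ts, v₁ t < v₂ t := by
      intro t ht
      by_contra hcon2
      push_neg at hcon2
      have : t ∈ A := ⟨⟨ht.1, lt_trans ht.2 htslt⟩, hcon2⟩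
      exact absurd (csInf_le hAbdd this) (not_le.mpr ht.2)
    have hDpos : ∀ t ∈ Ioo (0:ℝ) ts, 0 < D t := by
      intro t ht
      simp only [hD]
      linarith [hbefore t ht]
    have htsge : v₁ ts ≤ v₂ ts := by
      have hcont : Tendsto D (𝓝[<] ts) (𝓝 (D ts)) :=
        ((H₂.sol.1.continuous.sub H₁.sol.1.continuous).tendsto ts).mono_left nhdsWithin_le_nhds
      have h0le : 0 ≤ D ts := by
        refine ge_of_tendsto hcont ?_
        filter_upwards [Ioo_mem_nhdsLT_of_mem ⟨htspos, le_refl ts⟩] with t ht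
        exact le_of_lt (hDpos t ht)
      simp only [hD] at h0le
      linarith
    have hp : v₁ ts = v₂ ts := le_antisymm htsge htsc
    have hppos : 0 < v₁ ts := H₁.pos ts ⟨htspos, htslt⟩
    rcases lt_trichotomy ts (h/2) with hcase | hcase | hcase
    · -- ts < h/2 : derivative contradiction
      have hDts : D ts = 0 := by simp only [hD]; linarith
      have hdle : deriv v₂ ts - deriv v₁ ts ≤ 0 :=
        deriv_nonpos_left (hDd ts) hDts htspos hDpos
      have hdp₁ : 0 < deriv v₁ ts := H₁.dpos ts ⟨le_of_lt htspos, hcase⟩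
      have hdp₂ : 0 < deriv v₂ ts := H₂.dpos ts ⟨le_of_lt htspos, hcase⟩
      have e1 := H₁.energy ts
      have e2 := H₂.energy ts
      rw [hp] at e1
      nlinarith
    · -- ts = h/2 : amplitude contradiction
      rw [hcase] at hp
      rw [← hM₁, ← hM₂] at hp
      linarith
    · -- ts > h/2 : symmetry contradiction
      have h1 : h - ts ∈ Ioo (0:ℝ) ts := ⟨by linarith, by linarith⟩
      have h2 := hbefore (h - ts) h1
      rw [H₁.sym ts, H₂.sym ts] at h2
      linarith
  -- Wronskian
  set W : ℝ → ℝ := fun t => v₁ t * deriv v₂ t - deriv v₁ t * v₂ t with hW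
  have hWd : ∀ t, HasDerivAt W (a * (v₁ t * v₂ t) * (v₁ t ^ 2 - v₂ t ^ 2)) t := by
    intro t
    have h1 : HasDerivAt (deriv v₁) (deriv (deriv v₁) t) t := (sol_diff2 H₁.sol t).hasDerivAt
    have h2 : HasDerivAt (deriv v₂) (deriv (deriv v₂) t) t := (sol_diff2 H₂.sol t).hasDerivAt
    have H := ((hd₁ t).mul h2).sub (h1.mul (hd₂ t))
    refine H.congr_deriv ?_
    rw [H₁.sol.2 t, H₂.sol.2 t]
    ring
  have hanti : StrictAntiOn W (Icc 0 h) := by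
    apply strictAntiOn_of_deriv_neg (convex_Icc 0 h)
    · exact Continuous.continuousOn (by
        exact ((H₁.sol.1.continuous.mul (sol_deriv_contDiff H₂.sol).continuous).sub
          ((sol_deriv_contDiff H₁.sol).continuous.mul H₂.sol.1.continuous)))
    · intro t ht
      rw [interior_Icc] at ht
      rw [(hWd t).deriv]
      have hv1 := H₁.pos t ht
      have hv2 := H₂.pos t ht
      have hvlt := cross t ht
      have hs : v₁ t ^ 2 - v₂ t ^ 2 < 0 := by nlinarith
      exact mul_neg_of_pos_of_neg (mul_pos ha (mul_pos hv1 hv2)) hs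
  have hW0 : W 0 = 0 := by simp only [hW]; rw [H₁.zero0, H₂.zero0]; ring
  have hWh : W h = 0 := by simp only [hW]; rw [H₁.zeroh, H₂.zeroh]; ring
  have : W h < W 0 := hanti ⟨le_refl 0, le_of_lt hh⟩ ⟨le_of_lt hh, le_refl h⟩ hh
  rw [hW0, hWh] at this
  exact lt_irrefl 0 this


lemma exists_nice {T : ℝ} {k : ℕ} (hT : 0 < T) (hk : 1 ≤ k)
    (hu : SolEq lam a u) (hp : Function.Periodic u T) (hn : ¬ ∀ t, u t = 0)
    (hfin : {t ∈ Ico (0:ℝ) T | u t = 0}.Finite)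
    (hcard : {t ∈ Ico (0:ℝ) T | u t = 0}.ncard = 2 * k) :
    0 < Energy lam a (u 0) (deriv u 0) ∧
      ∃ v, Nice lam a (T / (2 * k)) (Energy lam a (u 0) (deriv u 0)) v := by
  set E := Energy lam a (u 0) (deriv u 0) with hEdef
  have hEc : ∀ t, deriv u t ^ 2 / 2 + lam * u t ^ 2 / 2 + a * u t ^ 4 / 4 = E := by
    intro t
    rw [hEdef]
    show _ = Energy lam a (u 0) (deriv u 0)
    rw [Energy]
    exact hu.energy_const t 0
  have hE2 : ∀ t, deriv u t ^ 2 + lam * u t ^ 2 + a * u t ^ 4 / 2 = 2 * E := by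
    intro t; have := hEc t; linarith
  -- a zero exists
  have hzne : {t ∈ Ico (0:ℝ) T | u t = 0}.Nonempty := by
    apply Set.nonempty_of_ncard_ne_zero
    rw [hcard]; omega
  obtain ⟨z, hzmem, hz0⟩ := hzne
  obtain ⟨R, hR0, hR⟩ := hu.bounded hT hp
  -- zero function is a solution
  have zsol : SolEq lam a (fun _ : ℝ => (0:ℝ)) := by
    constructor
    · exact contDiff_const
    · intro t
      have h1 : deriv (fun _ : ℝ => (0:ℝ)) = fun _ => (0:ℝ) := by
        funext s; exact deriv_const s 0
      rw [h1, h1]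
      norm_num
  have hzder : deriv (fun _ : ℝ => (0:ℝ)) = fun _ => (0:ℝ) := by
    funext s; exact deriv_const s 0
  -- derivative at the zero is nonzero
  have hdz : deriv u z ≠ 0 := by
    intro hd
    refine hn ?_
    refine sol_uniq hu zsol (R := R) ?_ z hz0 (by rw [hzder, hd]) 
    intro t
    refine ⟨(hR t).1, (hR t).2, by simp [hR0], by rw [hzder]; simp [hR0]⟩
  have hEpos : 0 < E := by
    have h1 := hEc z
    rw [hz0] at h1
    have h2 : deriv u z ^ 2 ≠ 0 := pow_ne_zero 2 hdz
    have h3 : 0 < deriv u z ^ 2 := lt_of_le_of_ne (sq_nonneg _) (Ne.symm h2)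
    nlinarith
  -- normalized translate
  have key : ∃ w : ℝ → ℝ, SolEq lam a w ∧ Function.Periodic w T ∧ w 0 = 0 ∧
      0 < deriv w 0 ∧ (∀ t, deriv w t ^ 2 + lam * w t ^ 2 + a * w t ^ 4 / 2 = 2 * E) ∧
      (∀ t, w t = 0 ↔ u (t + z) = 0) := by
    rcases hdz.lt_or_gt with hneg | hpos
    · refine ⟨fun t => -u (t + z), (hu.shift z).neg, ?_, by simp [hz0], ?_, ?_, ?_⟩
      · intro t
        show -u (t + T + z) = -u (t + z)
        have h1 : t + T + z = (t + z) + T := by ring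
        rw [h1, hp (t + z)]
      · have h1 : deriv (fun t => -u (t + z)) 0 = -(deriv u (0 + z)) := by
          have h2 : (fun t => -u (t + z)) = fun t => -((fun s => u (s + z)) t) := rfl
          rw [h2, deriv.fun_neg, deriv_comp_add_const u z 0]
        rw [h1, zero_add]
        linarith
      · intro t
        have h1 : deriv (fun t => -u (t + z)) t = -(deriv u (t + z)) := by
          have h2 : (fun t => -u (t + z)) = fun t => -((fun s => u (s + z)) t) := rfl
          rw [h2, deriv.fun_neg, deriv_comp_add_const u z t]
        rw [h1]
        have := hE2 (t + z)
        ring_nf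
        ring_nf at this
        linarith
      · intro t; simp only [neg_eq_zero]
    · refine ⟨fun t => u (t + z), hu.shift z, ?_, by simp [hz0], ?_, ?_, ?_⟩
      · intro t
        show u (t + T + z) = u (t + z)
        have h1 : t + T + z = (t + z) + T := by ring
        rw [h1, hp (t + z)]
      · have h1 : deriv (fun t => u (t + z)) 0 = deriv u (0 + z) := deriv_comp_add_const u z 0
        rw [h1, zero_add]
        exact hpos
      · intro t
        have h1 : deriv (fun t => u (t + z)) t = deriv u (t + z) := deriv_comp_add_const u z t
        rw [h1]
        exact hE2 (t + z)
      · intro t; rfl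
  obtain ⟨w, hw, hpw, h0w, hd0w, hEw, hzw⟩ := key
  -- zero set of w in [0,T) is finite
  have hfinw : {t ∈ Ico (0:ℝ) T | w t = 0}.Finite := by
    have h1 : {t ∈ Ico (0:ℝ) T | w t = 0} ⊆
        (fun s => s - z) '' {s ∈ Ico z (z + T) | u s = 0} := by
      rintro t ⟨ht, htz⟩
      exact ⟨t + z, ⟨⟨by linarith [ht.1], by linarith [ht.2]⟩, (hzw t).mp htz⟩, by ring⟩
    exact ((zeros_window_finite hT hp hfin z).image _).subset h1
  obtain ⟨g, hg0, hgT, Zset, sym, pos, dpos⟩ :=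
    normalized_structure hT hw hpw hfinw h0w hd0w hEw
  have hZiff : ∀ t : ℝ, w t = 0 ↔ ∃ j : ℤ, t = j * g := fun t => Set.ext_iff.mp Zset t
  -- u's zeros
  have huZ : ∀ t : ℝ, u t = 0 ↔ ∃ j : ℤ, t = z + j * g := by
    intro t
    have h1 : u t = 0 ↔ w (t - z) = 0 := by
      rw [hzw (t - z)]
      have : t - z + z = t := by ring
      rw [this]
    rw [h1, hZiff (t - z)]
    constructor
    · rintro ⟨j, hj⟩; exact ⟨j, by linarith⟩
    · rintro ⟨j, hj⟩; exact ⟨j, by linarith⟩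
  -- T is a multiple of g
  have hwT : w T = 0 := by
    have := hpw 0
    rw [zero_add] at this
    rw [this, h0w]
  obtain ⟨j, hjT⟩ := (hZiff T).mp hwT
  have hjpos : 0 < j := by
    by_contra hcon
    push_neg at hcon
    have h1 : (j:ℝ) ≤ 0 := by exact_mod_cast hcon
    nlinarith
  set N : ℕ := j.toNat with hN
  have hNcast : ((N:ℕ) : ℝ) = (j : ℝ) := by
    have : ((N:ℕ) : ℤ) = j := Int.toNat_of_nonneg (le_of_lt hjpos)
    exact_mod_cast this
  have hTN : T = (N:ℝ) * g := by rw [hNcast]; exact hjT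
  -- count zeros
  have hsetEq : {t ∈ Ico (0:ℝ) T | u t = 0}
      = {t : ℝ | t ∈ Ico (0:ℝ) ((N:ℝ) * g) ∧ ∃ i : ℤ, t = z + i * g} := by
    ext t
    simp only [mem_setOf_eq, mem_sep_iff]
    rw [hTN, huZ t]
  have hcount : N = 2 * k := by
    rw [hsetEq, count_lattice hg0 z N] at hcard
    exact hcard
  have hk0 : (0:ℝ) < 2 * (k:ℝ) := by
    have : (1:ℝ) ≤ (k:ℝ) := by exact_mod_cast hk
    linarith
  have hgval : g = T / (2 * (k:ℝ)) := by
    rw [hTN, hcount]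
    push_cast
    field_simp
  have hzg : w g = 0 := (hZiff g).mpr ⟨1, by norm_num⟩
  refine ⟨hEpos, w, ?_⟩
  rw [← hgval]
  exact ⟨hw, h0w, hzg, pos, sym, hEw, dpos⟩


end St1

theorem statement1 (T a : ℝ) (hT : 0 < T) (ha : 0 < a) (k : ℕ) (hk : 1 ≤ k) (lam : ℝ)
    (hlam : lam < sigmaEV T k) (u₁ u₂ : ℝ → ℝ)
    (h₁ : PeriodicSolC T a lam u₁) (h₁n : ¬ ∀ t, u₁ t = 0)
    (h₁z : HasExactZeros T u₁ (2 * k))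
    (h₂ : PeriodicSolC T a lam u₂) (h₂n : ¬ ∀ t, u₂ t = 0)
    (h₂z : HasExactZeros T u₂ (2 * k)) :
    (∀ t s : ℝ, Energy lam a (u₁ t) (deriv u₁ t) = Energy lam a (u₂ s) (deriv u₂ s)) ∧
      0 < Energy lam a (u₁ 0) (deriv u₁ 0)   := by
  classical
  have hs₁ : St1.SolEq lam a u₁ := ⟨h₁.2.1, fun t => by have := h₁.2.2 t; linarith⟩
  have hs₂ : St1.SolEq lam a u₂ := ⟨h₂.2.1, fun t => by have := h₂.2.2 t; linarith⟩
  obtain ⟨hE1pos, v₁, N₁⟩ := St1.exists_nice hT hk hs₁ h₁.1 h₁n h₁z.1 h₁z.2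
  obtain ⟨hE2pos, v₂, N₂⟩ := St1.exists_nice hT hk hs₂ h₂.1 h₂n h₂z.1 h₂z.2
  have hh : 0 < T / (2 * (k:ℝ)) := by
    apply div_pos hT
    have : (1:ℝ) ≤ (k:ℝ) := by exact_mod_cast hk
    linarith
  have hEeq : Energy lam a (u₁ 0) (deriv u₁ 0) = Energy lam a (u₂ 0) (deriv u₂ 0) := by
    rcases lt_trichotomy (Energy lam a (u₁ 0) (deriv u₁ 0))
      (Energy lam a (u₂ 0) (deriv u₂ 0)) with h | h | h
    · exact (St1.comparison ha hh N₁ N₂ h).elim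
    · exact h
    · exact (St1.comparison ha hh N₂ N₁ h).elim
  refine ⟨fun t s => ?_, hE1pos⟩
  have c1 : Energy lam a (u₁ t) (deriv u₁ t) = Energy lam a (u₁ 0) (deriv u₁ 0) := by
    simp only [Energy]
    exact hs₁.energy_const t 0
  have c2 : Energy lam a (u₂ s) (deriv u₂ s) = Energy lam a (u₂ 0) (deriv u₂ 0) := by
    simp only [Energy]
    exact hs₂.energy_const s 0
  rw [c1, hEeq]
  exact c2.symm
end
end

section
/- Assume T > 0 and that the weight a satisfies (HLoc). If u is a nontrivial T-periodic solution of −u'' = λu + a(t)u³ having exactly 2k zeros in [0,T) for some integer k ≥ 0, then λ < σ_k = (2πk/T)². In particular, if u is a nontrivial T-periodic solution of fixed sign (no zeros), then λ < 0. -/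
open MeasureTheory Set Filter

noncomputable section

/-- `u` is a `T`-periodic solution of `-u'' = lam*u + a(t)*u^3` in the Carathéodory sense:
`u` is `C^1`, `u'` is (locally) absolutely continuous with a.e. derivative `w`, and the
equation holds almost everywhere. -/
def PeriodicSol (T : ℝ) (a : ℝ → ℝ) (lam : ℝ) (u : ℝ → ℝ) : Prop :=
  Function.Periodic u T ∧ ContDiff ℝ 1 u ∧
    ∃ w : ℝ → ℝ, LocallyIntegrable w volume ∧
      (∀ t : ℝ, deriv u t = deriv u 0 + ∫ s in (0:ℝ)..t, w s) ∧
      (∀ᵐ t : ℝ ∂volume, -(w t) = lam * u t + a t * u t ^ 3)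

/-- Hypothesis (HLoc): `a` is `T`-periodic, measurable, essentially bounded on `[0,T]`,
nonnegative a.e. and not a.e. zero. -/
def HLoc (T : ℝ) (a : ℝ → ℝ) : Prop :=
  Function.Periodic a T ∧ Measurable a ∧
    (∃ C : ℝ, ∀ᵐ t ∂(volume.restrict (Set.Icc (0 : ℝ) T)), |a t| ≤ C) ∧
    (∀ᵐ t ∂(volume.restrict (Set.Icc (0 : ℝ) T)), 0 ≤ a t) ∧
    ¬ (∀ᵐ t ∂(volume.restrict (Set.Icc (0 : ℝ) T)), a t = 0)

open intervalIntegral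




/-- Triangle Fubini: swap order in a double integral over `{c < r ≤ s ≤ d}`. -/
lemma triangle_fubini {c d : ℝ} (hcd : c ≤ d) {w g : ℝ → ℝ}
    (hw : IntegrableOn w (Set.Ioc c d)) (hg : Continuous g) :
    ∫ s in c..d, w s * (∫ r in c..s, g r) = ∫ r in c..d, (∫ s in r..d, w s) * g r := by
  set μ := volume.restrict (Set.Ioc c d) with hμ
  have hμmeas : MeasurableSet (Set.Ioc c d) := measurableSet_Ioc
  have hgInt : IntegrableOn g (Set.Ioc c d) := by
    exact (hg.integrableOn_Icc (a := c) (b := d)).mono_set Set.Ioc_subset_Icc_self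
  have hprod : Integrable (fun p : ℝ × ℝ => w p.1 * g p.2) (μ.prod μ) := Integrable.mul_prod hw hgInt
  have hsetm : MeasurableSet {p : ℝ × ℝ | p.2 ≤ p.1} :=
    measurableSet_le measurable_snd measurable_fst
  set F : ℝ × ℝ → ℝ := Set.indicator {p : ℝ × ℝ | p.2 ≤ p.1} (fun p => w p.1 * g p.2) with hF
  have hFint : Integrable F (μ.prod μ) := hprod.indicator hsetm
  have swap := integral_integral_swap (f := fun s r => F (s, r)) (μ := μ) (ν := μ) hFint
  -- LHS computation
  have hL : ∫ s in c..d, w s * (∫ r in c..s, g r) = ∫ s, (∫ r, F (s, r) ∂μ) ∂μ := by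
    rw [intervalIntegral.integral_of_le hcd]
    apply setIntegral_congr_ae hμmeas
    filter_upwards [] with s hs
    have h1 : ∀ r, F (s, r) = w s * Set.indicator (Set.Iic s) g r := by
      intro r
      by_cases h : r ≤ s
      · simp [hF, Set.indicator_of_mem, h, Set.mem_Iic]
      · simp [hF, Set.indicator_of_notMem, h, Set.mem_Iic]
    simp_rw [h1]
    rw [MeasureTheory.integral_const_mul (μ := μ)]
    congr 1
    rw [hμ, MeasureTheory.integral_indicator measurableSet_Iic, Measure.restrict_restrict measurableSet_Iic,
      intervalIntegral.integral_of_le hs.1.le]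
    congr 1
    rw [Set.Iic_inter_Ioc_of_le hs.2]
  have hR : ∫ r, (∫ s, F (s, r) ∂μ) ∂μ = ∫ r in c..d, (∫ s in r..d, w s) * g r := by
    rw [intervalIntegral.integral_of_le hcd]
    apply setIntegral_congr_ae hμmeas
    filter_upwards [] with r hr
    have h1 : ∀ s, F (s, r) = Set.indicator (Set.Ici r) w s * g r := by
      intro s
      by_cases h : r ≤ s
      · simp [hF, Set.indicator_of_mem, h, Set.mem_Ici]
      · simp [hF, Set.indicator_of_notMem, h, Set.mem_Ici]
    simp_rw [h1]
    rw [MeasureTheory.integral_mul_const]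
    congr 1
    rw [hμ, MeasureTheory.integral_indicator measurableSet_Ici,
      Measure.restrict_restrict measurableSet_Ici,
      intervalIntegral.integral_of_le hr.2]
    have : Set.Ici r ∩ Set.Ioc c d = Set.Icc r d := by
      ext x
      simp only [Set.mem_inter_iff, Set.mem_Ici, Set.mem_Ioc, Set.mem_Icc]
      constructor
      · rintro ⟨h1, _, h3⟩; exact ⟨h1, h3⟩
      · rintro ⟨h1, h2⟩; exact ⟨h1, lt_of_lt_of_le hr.1 h1, h2⟩
    rw [this, ← MeasureTheory.integral_Icc_eq_integral_Ioc]
  rw [hL, swap, hR]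



section
variable {u w : ℝ → ℝ}

/-- IBP against an absolutely continuous derivative given in integral form. -/
lemma ibp_w {c d : ℝ} (hcd : c ≤ d) (hw : LocallyIntegrable w volume)
    (hw' : ∀ t : ℝ, deriv u t = deriv u 0 + ∫ s in (0:ℝ)..t, w s)
    {v v' : ℝ → ℝ} (hv1 : ∀ t, HasDerivAt v (v' t) t) (hv'c : Continuous v')
    (hU : Continuous (deriv u)) :
    ∫ t in c..d, w t * v t =
      deriv u d * v d - deriv u c * v c - ∫ t in c..d, deriv u t * v' t := by
  have hvc : Continuous v := by
    refine continuous_iff_continuousAt.2 fun t => (hv1 t).continuousAt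
  have hwII : ∀ c' d' : ℝ, IntervalIntegrable w volume c' d' := fun c' d' =>
    (hw.integrableOn_isCompact isCompact_uIcc).intervalIntegrable
  have hwIOn : IntegrableOn w (Set.Ioc c d) := (hwII c d).1
  -- FTC for v
  have hvFTC : ∀ x y : ℝ, ∫ r in x..y, v' r = v y - v x := fun x y =>
    intervalIntegral.integral_eq_sub_of_hasDerivAt (fun t _ => hv1 t)
      (hv'c.intervalIntegrable _ _)
  -- the primitive of w
  have hprim : ∀ x y : ℝ, ∫ s in x..y, w s = deriv u y - deriv u x := by
    intro x y
    rw [hw' x, hw' y, ← intervalIntegral.integral_interval_sub_left (hwII 0 y) (hwII 0 x)]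
    ring_nf
  have hcont_prim : Continuous fun s => ∫ r in c..s, v' r := by
    simp_rw [hvFTC c]
    exact hvc.sub continuous_const
  have split : ∫ t in c..d, w t * v t
      = (∫ t in c..d, w t * (∫ r in c..t, v' r)) + v c * ∫ t in c..d, w t := by
    have : ∀ t, w t * v t = w t * (∫ r in c..t, v' r) + w t * v c := by
      intro t; rw [hvFTC c t]; ring
    rw [intervalIntegral.integral_congr (g := fun t => w t * (∫ r in c..t, v' r) + w t * v c)
      (fun t _ => this t)]
    rw [intervalIntegral.integral_add ((hwII c d).mul_continuousOn hcont_prim.continuousOn)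
      ((hwII c d).mul_const _)]
    rw [intervalIntegral.integral_mul_const]
    ring
  rw [split, triangle_fubini hcd hwIOn hv'c]
  have : ∀ r, (∫ s in r..d, w s) * v' r = deriv u d * v' r - deriv u r * v' r := by
    intro r; rw [hprim r d]; ring
  rw [intervalIntegral.integral_congr (fun r _ => this r)]
  rw [intervalIntegral.integral_sub ((hv'c.intervalIntegrable c d).const_mul _)
    (show IntervalIntegrable (fun t => deriv u t * v' t) volume c d from (hU.mul hv'c).intervalIntegrable c d)]
  rw [intervalIntegral.integral_const_mul, hvFTC c d, hprim c d]
  ring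

end

section
variable {u w a : ℝ → ℝ} {lam : ℝ}

lemma core_nodal {c d μpar : ℝ} (hcd : c < d)
    (hu : ContDiff ℝ 1 u) (hw : LocallyIntegrable w volume)
    (hw' : ∀ t : ℝ, deriv u t = deriv u 0 + ∫ s in (0:ℝ)..t, w s)
    (hode : ∀ᵐ t : ℝ ∂volume, -(w t) = lam * u t + a t * u t ^ 3)
    (ha0 : ∀ᵐ t ∂(volume.restrict (Set.Ioo c d)), 0 ≤ a t)
    {v v' : ℝ → ℝ} (hv1 : ∀ t, HasDerivAt v (v' t) t)
    (hv2 : ∀ t, HasDerivAt v' (-μpar * v t) t)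
    (hvpos : ∀ t ∈ Set.Ioo c d, 0 < v t)
    (hbd : deriv u d * v d - u d * v' d = deriv u c * v c - u c * v' c)
    (hune : ∀ t ∈ Set.Ioo c d, u t ≠ 0) :
    lam ≤ μpar ∧ (lam = μpar → ∀ᵐ t ∂(volume.restrict (Set.Ioo c d)), a t = 0) := by
  have hvc : Continuous v := continuous_iff_continuousAt.2 fun t => (hv1 t).continuousAt
  have hv'c : Continuous v' := continuous_iff_continuousAt.2 fun t => (hv2 t).continuousAt
  have hucont : Continuous u := hu.continuous
  have hU : Continuous (deriv u) := hu.continuous_deriv le_rfl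
  have hudiff : ∀ t : ℝ, HasDerivAt u (deriv u t) t := fun t =>
    ((hu.differentiable one_ne_zero) t).hasDerivAt
  have hwII : IntervalIntegrable w volume c d :=
    (hw.integrableOn_isCompact isCompact_uIcc).intervalIntegrable
  -- integration by parts identities
  have A := ibp_w hcd.le hw hw' hv1 hv'c hU
  have B := intervalIntegral.integral_mul_deriv_eq_deriv_mul
    (u := u) (v := v') (u' := deriv u) (v' := fun t => -μpar * v t)
    (fun x _ => hudiff x) (fun x _ => hv2 x)
    ((hU.intervalIntegrable c d)) (((continuous_const.mul hvc).intervalIntegrable c d))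
  -- define f, a.e. equal to a * u^3
  set f : ℝ → ℝ := fun t => -(w t) - lam * u t with hfdef
  have hfae : ∀ᵐ t : ℝ ∂volume, f t = a t * u t ^ 3 := by
    filter_upwards [hode] with t ht
    simp only [hfdef]; linarith
  have fII : IntervalIntegrable f volume c d :=
    hwII.neg.sub ((continuous_const.mul hucont).intervalIntegrable c d)
  -- key identity
  have hptw : ∀ t, w t * v t - u t * (-μpar * v t)
      = (μpar - lam) * (u t * v t) - f t * v t := by
    intro t; simp only [hfdef]; ring
  have hsub : ∫ t in c..d, (w t * v t - u t * (-μpar * v t))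
      = ∫ t in c..d, ((μpar - lam) * (u t * v t) - f t * v t) :=
    intervalIntegral.integral_congr fun t _ => hptw t
  have huvII : IntervalIntegrable (fun t => u t * v t) volume c d :=
    (hucont.mul hvc).intervalIntegrable c d
  have hfvII : IntervalIntegrable (fun t => f t * v t) volume c d :=
    fII.mul_continuousOn hvc.continuousOn
  have hwvII : IntervalIntegrable (fun t => w t * v t) volume c d :=
    hwII.mul_continuousOn hvc.continuousOn
  have huv''II : IntervalIntegrable (fun t => u t * (-μpar * v t)) volume c d :=
    (hucont.mul (continuous_const.mul hvc)).intervalIntegrable c d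
  have hkey : (μpar - lam) * (∫ t in c..d, u t * v t) = ∫ t in c..d, f t * v t := by
    have h1 : (∫ t in c..d, w t * v t) - ∫ t in c..d, u t * (-μpar * v t) = 0 := by
      rw [A, B]; linarith [hbd]
    have h2 := intervalIntegral.integral_sub hwvII huv''II
    rw [← h2, hsub] at h1
    have h3 := intervalIntegral.integral_sub (huvII.const_mul (μpar - lam)) hfvII
    rw [h3] at h1
    rw [intervalIntegral.integral_const_mul] at h1
    linarith
  -- constant sign of u
  have hsign : (∀ t ∈ Set.Ioo c d, 0 < u t) ∨ (∀ t ∈ Set.Ioo c d, u t < 0) := by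
    by_contra h
    push_neg at h
    obtain ⟨⟨x, hx, hx0⟩, ⟨y, hy, hy0⟩⟩ := h
    have hxneg : u x < 0 := lt_of_le_of_ne hx0 (hune x hx)
    have hypos : 0 < u y := lt_of_le_of_ne hy0 (Ne.symm (hune y hy))
    rcases lt_trichotomy x y with hxy | hxy | hxy
    · obtain ⟨z, hz, hz0⟩ := intermediate_value_Icc hxy.le (hucont.continuousOn)
        (⟨hxneg.le, hypos.le⟩ : (0:ℝ) ∈ Set.Icc (u x) (u y))
      exact hune z ⟨lt_of_lt_of_le hx.1 hz.1, lt_of_le_of_lt hz.2 hy.2⟩ hz0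
    · rw [hxy] at hxneg; linarith
    · obtain ⟨z, hz, hz0⟩ := intermediate_value_Icc' hxy.le (hucont.continuousOn)
        (⟨hxneg.le, hypos.le⟩ : (0:ℝ) ∈ Set.Icc (u x) (u y))
      exact hune z ⟨lt_of_lt_of_le hy.1 hz.1, lt_of_le_of_lt hz.2 hx.2⟩ hz0
  obtain ⟨ε, hεone, hεu⟩ : ∃ ε : ℝ, (ε = 1 ∨ ε = -1) ∧ ∀ t ∈ Set.Ioo c d, 0 < ε * u t := by
    rcases hsign with h | h
    · exact ⟨1, Or.inl rfl, fun t ht => by simpa using h t ht⟩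
    · exact ⟨-1, Or.inr rfl, fun t ht => by simpa using h t ht⟩
  have hεne : ε ≠ 0 := by rcases hεone with h | h <;> rw [h] <;> norm_num
  -- the positive integral
  have hIpos : 0 < ∫ t in c..d, ε * (u t * v t) := by
    apply intervalIntegral.intervalIntegral_pos_of_pos_on
      (huvII.const_mul ε)
    · intro t ht
      have h1 : ε * (u t * v t) = (ε * u t) * v t := by ring
      rw [h1]
      exact mul_pos (hεu t ht) (hvpos t ht)
    · exact hcd
  have hkey2 : (μpar - lam) * (∫ t in c..d, ε * (u t * v t))
      = ∫ t in c..d, ε * (f t * v t) := by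
    rw [intervalIntegral.integral_const_mul, intervalIntegral.integral_const_mul]
    rw [← hkey]; ring
  -- nonnegativity of RHS a.e. on Ioo
  have hae_nonneg : ∀ᵐ t ∂(volume.restrict (Set.Ioo c d)), 0 ≤ ε * (f t * v t) := by
    filter_upwards [ha0, ae_restrict_of_ae hfae, ae_restrict_mem measurableSet_Ioo]
      with t ha hf ht
    have h1 : ε * (f t * v t) = a t * ((ε * u t) * (u t ^ 2 * v t)) := by
      rw [hf]; ring
    rw [h1]
    exact mul_nonneg ha (mul_nonneg (hεu t ht).le
      (mul_nonneg (sq_nonneg _) (hvpos t ht).le))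
  have hRset : ∫ t in c..d, ε * (f t * v t) = ∫ t in Set.Ioo c d, ε * (f t * v t) := by
    rw [intervalIntegral.integral_of_le hcd.le, MeasureTheory.integral_Ioc_eq_integral_Ioo]
  have hRnn : 0 ≤ ∫ t in c..d, ε * (f t * v t) := by
    rw [hRset]
    exact MeasureTheory.integral_nonneg_of_ae hae_nonneg
  constructor
  · nlinarith [hkey2, hIpos, hRnn]
  · intro heq
    have hR0 : ∫ t in Set.Ioo c d, ε * (f t * v t) = 0 := by
      rw [← hRset, ← hkey2, heq]; ring
    have hInt : IntegrableOn (fun t => ε * (f t * v t)) (Set.Ioo c d) :=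
      ((hfvII.const_mul ε).1).mono_set Set.Ioo_subset_Ioc_self
    have hzero : (fun t => ε * (f t * v t)) =ᵐ[volume.restrict (Set.Ioo c d)] 0 := by
      have := (MeasureTheory.integral_eq_zero_iff_of_nonneg_ae hae_nonneg hInt).1 hR0
      exact this
    filter_upwards [hzero, ae_restrict_of_ae hfae, ae_restrict_mem measurableSet_Ioo]
      with t h0 hf ht
    have h1 : a t * (ε * (u t ^ 3 * v t)) = 0 := by
      have : ε * (f t * v t) = a t * (ε * (u t ^ 3 * v t)) := by rw [hf]; ring
      rw [← this]; exact h0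
    rcases mul_eq_zero.mp h1 with h | h
    · exact h
    · exfalso
      exact (mul_ne_zero hεne (mul_ne_zero (pow_ne_zero _ (hune t ht))
        (ne_of_gt (hvpos t ht)))) h
end

section
variable {u w a : ℝ → ℝ} {lam : ℝ}

lemma nodal_interval {c d : ℝ} (hcd : c < d)
    (hu : ContDiff ℝ 1 u) (hw : LocallyIntegrable w volume)
    (hw' : ∀ t : ℝ, deriv u t = deriv u 0 + ∫ s in (0:ℝ)..t, w s)
    (hode : ∀ᵐ t : ℝ ∂volume, -(w t) = lam * u t + a t * u t ^ 3)
    (ha0 : ∀ᵐ t ∂(volume.restrict (Set.Ioo c d)), 0 ≤ a t)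
    (huc : u c = 0) (hud : u d = 0)
    (hune : ∀ t ∈ Set.Ioo c d, u t ≠ 0) :
    lam ≤ (Real.pi / (d - c)) ^ 2 ∧
      (lam = (Real.pi / (d - c)) ^ 2 →
        ∀ᵐ t ∂(volume.restrict (Set.Ioo c d)), a t = 0) := by
  have hℓ : 0 < d - c := sub_pos.2 hcd
  set ω : ℝ := Real.pi / (d - c) with hω
  have hωpos : 0 < ω := div_pos Real.pi_pos hℓ
  set v : ℝ → ℝ := fun t => Real.sin (ω * (t - c)) with hv
  set v' : ℝ → ℝ := fun t => Real.cos (ω * (t - c)) * ω with hv'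
  have hinner : ∀ t : ℝ, HasDerivAt (fun t => ω * (t - c)) ω t := by
    intro t
    simpa using ((hasDerivAt_id t).sub_const c).const_mul ω
  have hv1 : ∀ t, HasDerivAt v (v' t) t := by
    intro t
    exact (Real.hasDerivAt_sin (ω * (t - c))).comp t (hinner t)
  have hv2 : ∀ t, HasDerivAt v' (-(ω ^ 2) * v t) t := by
    intro t
    have h := ((Real.hasDerivAt_cos (ω * (t - c))).comp t (hinner t)).mul_const ω
    exact h.congr_deriv (by simp only [hv]; ring)
  have hωd : ω * (d - c) = Real.pi := by
    rw [hω]; field_simp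
  have hvc0 : v c = 0 := by simp [hv]
  have hvd0 : v d = 0 := by simp [hv, hωd]
  have hvpos : ∀ t ∈ Set.Ioo c d, 0 < v t := by
    intro t ht
    apply Real.sin_pos_of_pos_of_lt_pi
    · exact mul_pos hωpos (sub_pos.2 ht.1)
    · rw [← hωd]
      exact mul_lt_mul_of_pos_left (by linarith [ht.2]) hωpos
  have hbd : deriv u d * v d - u d * v' d = deriv u c * v c - u c * v' c := by
    rw [hvc0, hvd0, huc, hud]; ring
  exact core_nodal hcd hu hw hw' hode ha0 hv1 hv2 hvpos hbd hune

end

section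
variable {u w a : ℝ → ℝ} {lam : ℝ}

/-- Periodicity of the derivative. -/
lemma deriv_periodic {T : ℝ} (hper : Function.Periodic u T) :
    Function.Periodic (deriv u) T := by
  intro x
  have h1 : (fun y : ℝ => u (y + T)) = u := funext fun y => hper y
  calc deriv u (x + T) = deriv (fun y => u (y + T)) x := (deriv_comp_add_const u T x).symm
    _ = deriv u x := by rw [h1]

lemma positive_case {T : ℝ} (hT : 0 < T)
    (hper : Function.Periodic u T)
    (hu : ContDiff ℝ 1 u) (hw : LocallyIntegrable w volume)
    (hw' : ∀ t : ℝ, deriv u t = deriv u 0 + ∫ s in (0:ℝ)..t, w s)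
    (hode : ∀ᵐ t : ℝ ∂volume, -(w t) = lam * u t + a t * u t ^ 3)
    (ha0 : ∀ᵐ t ∂(volume.restrict (Set.Ioo 0 T)), 0 ≤ a t)
    (hune : ∀ t ∈ Set.Ioo (0:ℝ) T, u t ≠ 0) :
    lam ≤ 0 ∧ (lam = 0 → ∀ᵐ t ∂(volume.restrict (Set.Ioo (0:ℝ) T)), a t = 0) := by
  have hv1 : ∀ t : ℝ, HasDerivAt (fun _ : ℝ => (1:ℝ)) ((fun _ : ℝ => (0:ℝ)) t) t :=
    fun t => hasDerivAt_const t 1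
  have hv2 : ∀ t : ℝ, HasDerivAt (fun _ : ℝ => (0:ℝ)) (-(0:ℝ) * (fun _ : ℝ => (1:ℝ)) t) t := by
    intro t
    simpa using hasDerivAt_const t (0:ℝ)
  have hbd : deriv u T * 1 - u T * 0 = deriv u 0 * 1 - u 0 * 0 := by
    have := deriv_periodic hper 0
    simp only [zero_add] at this
    rw [this]; ring
  exact core_nodal hT hu hw hw' hode ha0 hv1 hv2 (fun t _ => one_pos) hbd hune

end

section

lemma ae_restrict_iff_null {s : Set ℝ} (hs : MeasurableSet s) (P : ℝ → Prop) :
    (∀ᵐ t ∂(volume.restrict s), P t) ↔ volume ({t | ¬ P t} ∩ s) = 0 := by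
  rw [ae_iff, Measure.restrict_apply' hs]

lemma null_shift {A : Set ℝ} (hA : MeasurableSet A) (h : volume A = 0) (s : ℝ) :
    volume ((fun x => x + s) ⁻¹' A) = 0 := by
  rw [(measurePreserving_add_right volume s).measure_preimage hA.nullMeasurableSet]
  exact h

lemma null_glue (n : ℕ) (b : ℕ → ℝ) (N : Set ℝ)
    (h : ∀ i, i < n → volume (N ∩ Set.Ioo (b i) (b (i + 1))) = 0) :
    volume (N ∩ Set.Icc (b 0) (b n)) = 0 := by
  induction n with
  | zero =>
    refine measure_mono_null (fun x hx => ?_) (Real.volume_singleton (a := b 0))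
    rw [Set.Icc_self] at hx
    exact hx.2
  | succ m ih =>
    have h0m : volume (N ∩ Set.Icc (b 0) (b m)) = 0 :=
      ih fun i hi => h i (hi.trans (Nat.lt_succ_self m))
    have hsub : N ∩ Set.Icc (b 0) (b (m + 1)) ⊆
        (N ∩ Set.Icc (b 0) (b m)) ∪ ((N ∩ Set.Ioo (b m) (b (m + 1))) ∪ {b (m + 1)}) := by
      rintro x ⟨hxN, hx0, hx1⟩
      by_cases hxm : x ≤ b m
      · exact Or.inl ⟨hxN, hx0, hxm⟩
      · push_neg at hxm
        rcases lt_or_eq_of_le hx1 with h' | h'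
        · exact Or.inr (Or.inl ⟨hxN, hxm, h'⟩)
        · exact Or.inr (Or.inr h')
    apply measure_mono_null hsub
    exact measure_union_null h0m
      (measure_union_null (h m (Nat.lt_succ_self m)) Real.volume_singleton)

lemma chain_mono {n : ℕ} {b : ℕ → ℝ} (hblt : ∀ i, i < n → b i < b (i + 1)) :
    ∀ i j, i ≤ j → j ≤ n → b i ≤ b j := by
  intro i j hij hjn
  induction j with
  | zero => simp_all
  | succ m ih =>
    rcases Nat.lt_or_ge i (m + 1) with h' | h'
    · have h1 : b i ≤ b m := ih (by omega) (by omega)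
      exact h1.trans (hblt m (by omega)).le
    · have : i = m + 1 := le_antisymm hij h'
      rw [this]

end

theorem statement4 (T : ℝ) (hT : 0 < T) (a : ℝ → ℝ) (hA : HLoc T a)
    (lam : ℝ) (k : ℕ) (u : ℝ → ℝ)
    (hu : PeriodicSol T a lam u) (hnt : ¬ ∀ t, u t = 0)
    (hz : HasExactZeros T u (2 * k)) :
    lam < sigmaEV T k := by
  obtain ⟨hpera, hmeasa, -, ha_nonneg, ha_ne⟩ := hA
  obtain ⟨hper, hC1, w, hwloc, hw', hode⟩ := hu
  obtain ⟨hfin, hcard⟩ := hz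
  set Zset : Set ℝ := {t ∈ Set.Ico (0 : ℝ) T | u t = 0} with hZset
  -- the final contradiction builder
  have contra : volume ({t : ℝ | a t ≠ 0} ∩ Set.Icc 0 T) = 0 → False := by
    intro h
    exact ha_ne ((ae_restrict_iff_null measurableSet_Icc _).2 h)
  rcases Nat.eq_zero_or_pos k with hk0 | hkpos
  -- ===================== Case k = 0 =====================
  · subst hk0
    have hZempty : Zset = ∅ := by
      rw [← Set.ncard_eq_zero hfin]; simpa using hcard
    have hune0 : ∀ t ∈ Set.Ioo (0:ℝ) T, u t ≠ 0 := by
      intro t ht h0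
      have : t ∈ Zset := ⟨⟨ht.1.le, ht.2⟩, h0⟩
      rw [hZempty] at this; exact this
    have ha0' : ∀ᵐ t ∂(volume.restrict (Set.Ioo (0:ℝ) T)), 0 ≤ a t :=
      ae_restrict_of_ae_restrict_of_subset Set.Ioo_subset_Icc_self ha_nonneg
    obtain ⟨hle, heq⟩ := positive_case hT hper hC1 hwloc hw' hode ha0' hune0
    have hσ : sigmaEV T 0 = 0 := by simp [sigmaEV]
    rw [hσ]
    rcases lt_or_eq_of_le hle with h | h
    · exact h
    · exfalso
      have hzero := heq h
      apply contra
      have h1 : volume ({t : ℝ | a t ≠ 0} ∩ Set.Ioo (0:ℝ) T) = 0 :=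
        (ae_restrict_iff_null measurableSet_Ioo _).1 hzero
      have hsub : {t : ℝ | a t ≠ 0} ∩ Set.Icc 0 T ⊆
          ({t : ℝ | a t ≠ 0} ∩ Set.Ioo (0:ℝ) T) ∪ ({0} ∪ {T}) := by
        rintro x ⟨hxN, hx0, hxT⟩
        rcases eq_or_lt_of_le hx0 with h' | h'
        · exact Or.inr (Or.inl h'.symm)
        rcases eq_or_lt_of_le hxT with h' | h'
        · exact Or.inr (Or.inr h')
        · exact Or.inl ⟨hxN, ‹_›, ‹_›⟩
      exact measure_mono_null hsub (measure_union_null h1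
        (measure_union_null Real.volume_singleton Real.volume_singleton))
  -- ===================== Case k ≥ 1 =====================
  · set n : ℕ := 2 * k with hn
    have hn0 : 0 < n := by omega
    have hcard' : hfin.toFinset.card = n := by
      rw [← hcard, Set.ncard_eq_toFinset_card Zset hfin]
    set e := hfin.toFinset.orderIsoOfFin hcard' with he
    set tz : Fin n → ℝ := fun i => (e i : ℝ) with htz
    have htmem : ∀ i, tz i ∈ Zset := fun i => hfin.mem_toFinset.1 (e i).2
    have htmono : StrictMono tz := fun i j hij => Subtype.coe_lt_coe.2 (e.strictMono hij)
    have hsurj : ∀ z ∈ Zset, ∃ i, tz i = z := by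
      intro z hz
      refine ⟨e.symm ⟨z, hfin.mem_toFinset.2 hz⟩, ?_⟩
      simp [htz]
    set t0 : ℝ := tz ⟨0, hn0⟩ with ht0
    have ht0mem := htmem ⟨0, hn0⟩
    have htmin : ∀ i, t0 ≤ tz i := fun i => htmono.monotone (by simp [Fin.le_def])
    set b : ℕ → ℝ := fun i => if h : i < n then tz ⟨i, h⟩ else t0 + T with hb
    have hb0 : b 0 = t0 := by simp [hb, hn0, ht0]
    have hbn : b n = t0 + T := by simp [hb]
    have hblt : ∀ i, i < n → b i < b (i + 1) := by
      intro i hi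
      by_cases h : i + 1 < n
      · have : b i = tz ⟨i, hi⟩ := by simp [hb, hi]
        rw [this]
        have : b (i + 1) = tz ⟨i + 1, h⟩ := by simp [hb, h]
        rw [this]
        exact htmono (by simp [Fin.lt_def])
      · have h1 : b i = tz ⟨i, hi⟩ := by simp [hb, hi]
        have h2 : b (i + 1) = t0 + T := by simp [hb, h]
        rw [h1, h2]
        have h3 : tz ⟨i, hi⟩ < T := (htmem ⟨i, hi⟩).1.2
        have h4 : 0 ≤ t0 := ht0mem.1.1
        linarith
    have hbz : ∀ i, i ≤ n → u (b i) = 0 := by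
      intro i hi
      rcases lt_or_eq_of_le hi with h | h
      · have : b i = tz ⟨i, h⟩ := by simp [hb, h]
        rw [this]; exact (htmem ⟨i, h⟩).2
      · subst h
        rw [hbn]
        have := hper t0
        rw [this]
        exact ht0mem.2
    have hbmax : ∀ i (hi : i < n) (h : ¬ (i + 1 < n)) (j : Fin n), tz j ≤ tz ⟨i, hi⟩ := by
      intro i hi h j
      exact htmono.monotone (by simp [Fin.le_def]; omega)
    have hbno : ∀ i, i < n → ∀ z ∈ Set.Ioo (b i) (b (i + 1)), u z ≠ 0 := by
      intro i hi z hz hz0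
      have hbi : b i = tz ⟨i, hi⟩ := by simp [hb, hi]
      have h0z : 0 ≤ z := le_trans (le_trans ht0mem.1.1 (hbi ▸ htmin ⟨i, hi⟩)) hz.1.le
      by_cases h : i + 1 < n
      · have hbi1 : b (i + 1) = tz ⟨i + 1, h⟩ := by simp [hb, h]
        have hzT : z < T := lt_trans (hbi1 ▸ hz.2) (htmem ⟨i + 1, h⟩).1.2
        obtain ⟨j, hj⟩ := hsurj z ⟨⟨h0z, hzT⟩, hz0⟩
        have h1 : (⟨i, hi⟩ : Fin n) < j := htmono.lt_iff_lt.1 (by rw [hj, ← hbi]; exact hz.1)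
        have h2 : j < (⟨i + 1, h⟩ : Fin n) := htmono.lt_iff_lt.1 (by rw [hj, ← hbi1]; exact hz.2)
        rw [Fin.lt_def] at h1 h2
        simp at h1 h2; omega
      · have hbi1 : b (i + 1) = t0 + T := by simp [hb, h]
        rcases lt_or_ge z T with hzT | hzT
        · obtain ⟨j, hj⟩ := hsurj z ⟨⟨h0z, hzT⟩, hz0⟩
          have h1 : tz ⟨i, hi⟩ < tz j := by rw [hj, ← hbi]; exact hz.1
          exact absurd (hbmax i hi h j) (not_le.2 h1)
        · have hz2 : z - T < t0 := by
            have := hz.2; rw [hbi1] at this; linarith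
          have hzz : u (z - T) = 0 := by
            have h2 := hper (z - T)
            simp only [sub_add_cancel] at h2
            rw [← h2]; exact hz0
          have hzmem : z - T ∈ Zset := by
            refine ⟨⟨by linarith, ?_⟩, hzz⟩
            have : t0 < T := ht0mem.1.2
            linarith
          obtain ⟨j, hj⟩ := hsurj _ hzmem
          have : t0 ≤ z - T := hj ▸ htmin j
          linarith
    -- a ≥ 0 a.e. on [0, 2T]
    set Bad : Set ℝ := {x | ¬ (0:ℝ) ≤ a x} with hBadDef
    have hBadm : MeasurableSet Bad := by
      have : Bad = a ⁻¹' (Set.Iio 0) := by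
        ext x; simp [hBadDef, not_le]
      rw [this]; exact hmeasa measurableSet_Iio
    have h01 : volume (Bad ∩ Set.Icc 0 T) = 0 :=
      (ae_restrict_iff_null measurableSet_Icc _).1 ha_nonneg
    have h12 : volume (Bad ∩ Set.Icc T (2 * T)) = 0 := by
      have key : Bad ∩ Set.Icc T (2 * T) = (fun x => x + -T) ⁻¹' (Bad ∩ Set.Icc 0 T) := by
        ext x
        have hax : a (x + -T) = a x := by
          have := hpera (x + -T)
          simpa using this.symm
        simp only [Set.mem_inter_iff, Set.mem_Icc, Set.mem_preimage, hBadDef,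
          Set.mem_setOf_eq, hax]
        constructor
        · rintro ⟨h1, h2, h3⟩; exact ⟨h1, by linarith, by linarith⟩
        · rintro ⟨h1, h2, h3⟩; exact ⟨h1, by linarith, by linarith⟩
      rw [key]
      exact null_shift (hBadm.inter measurableSet_Icc) h01 (-T)
    have ha2T : ∀ᵐ t ∂(volume.restrict (Set.Icc (0:ℝ) (2 * T))), 0 ≤ a t := by
      rw [ae_restrict_iff_null measurableSet_Icc]
      refine measure_mono_null ?_ (measure_union_null h01 h12)
      rintro x ⟨hxB, hx0, hxT⟩
      by_cases h : x ≤ T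
      · exact Or.inl ⟨hxB, hx0, h⟩
      · exact Or.inr ⟨hxB, le_of_not_ge h, hxT⟩
    have hchain := chain_mono hblt
    have hsub2T : ∀ i, i < n → Set.Ioo (b i) (b (i + 1)) ⊆ Set.Icc (0:ℝ) (2 * T) := by
      intro i hi x hx
      have h1 : b 0 ≤ b i := hchain 0 i (Nat.zero_le i) hi.le
      have h2 : b (i + 1) ≤ b n := hchain (i + 1) n hi le_rfl
      have h3 : 0 ≤ t0 := ht0mem.1.1
      have h4 : t0 < T := ht0mem.1.2
      rw [hb0] at h1; rw [hbn] at h2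
      constructor
      · linarith [hx.1]
      · linarith [hx.2]
    have ha0i : ∀ i, i < n →
        ∀ᵐ t ∂(volume.restrict (Set.Ioo (b i) (b (i + 1)))), 0 ≤ a t := fun i hi =>
      ae_restrict_of_ae_restrict_of_subset (hsub2T i hi) ha2T
    have hnodal : ∀ i (hi : i < n),
        lam ≤ (Real.pi / (b (i + 1) - b i)) ^ 2 ∧
          (lam = (Real.pi / (b (i + 1) - b i)) ^ 2 →
            ∀ᵐ t ∂(volume.restrict (Set.Ioo (b i) (b (i + 1)))), a t = 0) := fun i hi =>
      nodal_interval (hblt i hi) hC1 hwloc hw' hode (ha0i i hi)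
        (hbz i hi.le) (hbz (i + 1) hi) (hbno i hi)
    -- suppose σ_k ≤ lam, derive contradiction
    by_contra hcon
    push_neg at hcon
    have hπ := Real.pi_pos
    have hnR : (n : ℝ) = 2 * (k : ℝ) := by rw [hn]; push_cast; ring
    have hnRpos : (0 : ℝ) < (n : ℝ) := Nat.cast_pos.2 hn0
    have hσn : sigmaEV T k = (Real.pi / (T / (n : ℝ))) ^ 2 := by
      rw [sigmaEV, hnR]
      congr 1
      field_simp
    have hTn : 0 < T / (n : ℝ) := div_pos hT hnRpos
    have hlen : ∀ i, i < n → b (i + 1) - b i ≤ T / (n : ℝ) := by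
      intro i hi
      set ℓ := b (i + 1) - b i with hℓ
      have hℓpos : 0 < ℓ := sub_pos.2 (hblt i hi)
      have h1 : (Real.pi / (T / (n : ℝ))) ^ 2 ≤ (Real.pi / ℓ) ^ 2 := by
        rw [← hσn]
        exact hcon.trans (hnodal i hi).1
      have h4 : 0 < Real.pi / (T / (n : ℝ)) := div_pos hπ hTn
      have h5 : 0 < Real.pi / ℓ := div_pos hπ hℓpos
      have h2 : Real.pi / (T / (n : ℝ)) ≤ Real.pi / ℓ := by
        have := Real.sqrt_le_sqrt h1
        rwa [Real.sqrt_sq h4.le, Real.sqrt_sq h5.le] at this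
      rw [div_le_div_iff₀ hTn hℓpos] at h2
      nlinarith
    have hsum : ∑ i ∈ Finset.range n, (b (i + 1) - b i) = T := by
      rw [Finset.sum_range_sub b n, hbn, hb0]
      ring
    have hall : ∀ i, i < n → b (i + 1) - b i = T / (n : ℝ) := by
      by_contra h
      push_neg at h
      obtain ⟨i0, hi0, hne⟩ := h
      have hlt : ∑ i ∈ Finset.range n, (b (i + 1) - b i)
          < ∑ _i ∈ Finset.range n, T / (n : ℝ) :=
        Finset.sum_lt_sum (fun i hi => hlen i (Finset.mem_range.1 hi))
          ⟨i0, Finset.mem_range.2 hi0, lt_of_le_of_ne (hlen i0 hi0) hne⟩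
      rw [hsum, Finset.sum_const, Finset.card_range, nsmul_eq_mul] at hlt
      rw [mul_div_cancel₀ T (ne_of_gt hnRpos)] at hlt
      exact lt_irrefl _ hlt
    have hlam : lam = sigmaEV T k := by
      refine le_antisymm ?_ hcon
      have h1 := (hnodal 0 hn0).1
      rw [hall 0 hn0, ← hσn] at h1
      exact h1
    have hzero_i : ∀ i, i < n →
        ∀ᵐ t ∂(volume.restrict (Set.Ioo (b i) (b (i + 1)))), a t = 0 := by
      intro i hi
      apply (hnodal i hi).2
      rw [hall i hi, ← hσn]
      exact hlam
    -- gluing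
    set N : Set ℝ := {x | ¬ a x = 0} with hNdef
    have hNm : MeasurableSet N := by
      have : N = a ⁻¹' ({0}ᶜ) := by ext x; simp [hNdef]
      rw [this]
      exact hmeasa (measurableSet_singleton 0).compl
    have hglue : volume (N ∩ Set.Icc (b 0) (b n)) = 0 :=
      null_glue n b N fun i hi =>
        (ae_restrict_iff_null measurableSet_Ioo _).1 (hzero_i i hi)
    have hA1 : volume (N ∩ Set.Icc t0 (t0 + T)) = 0 := by
      rw [← hbn, ← hb0]; exact hglue
    have hB1 : volume (N ∩ Set.Icc (t0 - T) t0) = 0 := by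
      have key : N ∩ Set.Icc (t0 - T) t0 = (fun x => x + T) ⁻¹' (N ∩ Set.Icc t0 (t0 + T)) := by
        ext x
        have hax : a (x + T) = a x := hpera x
        simp only [Set.mem_inter_iff, Set.mem_Icc, Set.mem_preimage, hNdef,
          Set.mem_setOf_eq, hax]
        constructor
        · rintro ⟨h1, h2, h3⟩; exact ⟨h1, by linarith, by linarith⟩
        · rintro ⟨h1, h2, h3⟩; exact ⟨h1, by linarith, by linarith⟩
      rw [key]
      exact null_shift (hNm.inter measurableSet_Icc) hA1 T
    apply contra
    have hsub : {t : ℝ | a t ≠ 0} ∩ Set.Icc 0 T ⊆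
        (N ∩ Set.Icc (t0 - T) t0) ∪ (N ∩ Set.Icc t0 (t0 + T)) := by
      rintro x ⟨hxN, hx0, hxT⟩
      have h1 : 0 ≤ t0 := ht0mem.1.1
      have h2 : t0 < T := ht0mem.1.2
      by_cases h : x ≤ t0
      · exact Or.inl ⟨hxN, by linarith, h⟩
      · exact Or.inr ⟨hxN, le_of_not_ge h, by linarith⟩
    exact measure_mono_null hsub (measure_union_null hB1 hA1)
end
end

section
/- Let a, b ∈ ℝ with a + 2b > 0 and a − 2b > 0. If (x, y) ∈ ℝ² satisfies the system a·x³ + 3b·x²y + a·xy² + b·y³ = 0 and b·x³ + a·x²y + 3b·xy² + a·y³ = 0, then x = 0 and y = 0. -/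
/-! Pairing the system with `(x, y)` gives
`x·𝒞₁ + y·𝒞₂ = (x² + y²)·(a(x² + y²) + 4bxy)`, and the second factor is positive definite
because twice it equals `(a + 2b)(x + y)² + (a − 2b)(x − y)²`. -/

theorem euler_pairing_cubic (a b x y : ℝ) :
    x * (a * x ^ 3 + 3 * b * x ^ 2 * y + a * x * y ^ 2 + b * y ^ 3) +
        y * (b * x ^ 3 + a * x ^ 2 * y + 3 * b * x * y ^ 2 + a * y ^ 3) =
      (x ^ 2 + y ^ 2) * (a * (x ^ 2 + y ^ 2) + 4 * b * (x * y)) := by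
  ring

theorem sq_add_sq_pos_of_ne_zero_or {x y : ℝ} (h : x ≠ 0 ∨ y ≠ 0) : 0 < x ^ 2 + y ^ 2 := by
  rcases h with h | h <;> positivity

theorem quadratic_form_pos {a b x y : ℝ} (h₁ : 0 < a + 2 * b) (h₂ : 0 < a - 2 * b)
    (h : x ≠ 0 ∨ y ≠ 0) : 0 < a * (x ^ 2 + y ^ 2) + 4 * b * (x * y) := by
  have hsq : 0 < (x + y) ^ 2 + (x - y) ^ 2 := by
    linarith [sq_add_sq_pos_of_ne_zero_or h,
      show (x + y) ^ 2 + (x - y) ^ 2 = 2 * (x ^ 2 + y ^ 2) by ring]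
  set m := min (a + 2 * b) (a - 2 * b)
  have hdiag : 0 < 2 * (a * (x ^ 2 + y ^ 2) + 4 * b * (x * y)) :=
    calc 0 < m * ((x + y) ^ 2 + (x - y) ^ 2) := mul_pos (lt_min h₁ h₂) hsq
      _ = m * (x + y) ^ 2 + m * (x - y) ^ 2 := mul_add _ _ _
      _ ≤ (a + 2 * b) * (x + y) ^ 2 + (a - 2 * b) * (x - y) ^ 2 := by
        gcongr
        exacts [min_le_left _ _, min_le_right _ _]
      _ = 2 * (a * (x ^ 2 + y ^ 2) + 4 * b * (x * y)) := by ring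
  linarith

theorem statement11 (a b : ℝ) (h₁ : 0 < a + 2 * b) (h₂ : 0 < a - 2 * b) (x y : ℝ)
    (e₁ : a * x ^ 3 + 3 * b * x ^ 2 * y + a * x * y ^ 2 + b * y ^ 3 = 0)
    (e₂ : b * x ^ 3 + a * x ^ 2 * y + 3 * b * x * y ^ 2 + a * y ^ 3 = 0) :
    x = 0 ∧ y = 0 := by
  by_contra hxy
  rw [not_and_or] at hxy
  have hpos := mul_pos (sq_add_sq_pos_of_ne_zero_or hxy) (quadratic_form_pos h₁ h₂ hxy)
  rw [← euler_pairing_cubic, e₁, e₂] at hpos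
  simp at hpos
end

section
/- Let a, b ∈ ℝ with a + 2b > 0, a − 2b > 0 and b ≠ 0. Then the set of solutions (z, w) ∈ ℝ² \ {(0,0)} of the system z(a·z² + 3b·zw + a·w² − 1) = −b·w³ and w(a·z² + 3b·zw + a·w² − 1) = −b·z³ consists exactly of the four points (c, c), (−c, −c), (d, −d), (−d, d), where c := 1/√(2(a + 2b)) and d := 1/√(2(a − 2b)). -/
open MeasureTheory Set Filter

noncomputable section

/-!
Subtracting and adding the two equations factors them as
`(z - w) (Q - b (z² + z w + w²)) = 0` and `(z + w) (Q + b (z² - z w + w²)) = 0`,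
where `Q = a z² + 3 b z w + a w² - 1`. If both second factors vanished, their difference
`2 b (z² + w²)` would vanish, forcing `z = w = 0` since `b ≠ 0`. So every nontrivial solution
lies on the diagonal or the antidiagonal, where the system collapses to
`z (2 (a ± 2b) z² - 1) = 0`.
-/

def BifurcationEqs (a b z w : ℝ) : Prop :=
  z * (a * z ^ 2 + 3 * b * z * w + a * w ^ 2 - 1) = -(b * w ^ 3) ∧
    w * (a * z ^ 2 + 3 * b * z * w + a * w ^ 2 - 1) = -(b * z ^ 3)

lemma eq_or_eq_neg_of_bifurcationEqs {a b z w : ℝ} (hb : b ≠ 0) (hzw : (z, w) ≠ (0, 0))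
    (h : BifurcationEqs a b z w) : w = z ∨ w = -z := by
  obtain ⟨e₁, e₂⟩ := h
  set Q := a * z ^ 2 + 3 * b * z * w + a * w ^ 2 - 1
  have hdiff : (z - w) * (Q - b * (z ^ 2 + z * w + w ^ 2)) = 0 := by linear_combination e₁ - e₂
  have hsum : (z + w) * (Q + b * (z ^ 2 - z * w + w ^ 2)) = 0 := by linear_combination e₁ + e₂
  rcases mul_eq_zero.mp hdiff with hdiag | hQ₁
  · exact Or.inl (by linarith)
  rcases mul_eq_zero.mp hsum with hanti | hQ₂
  · exact Or.inr (by linarith)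
  have hnorm : b * (z ^ 2 + w ^ 2) = 0 := by linear_combination (hQ₂ - hQ₁) / 2
  have hz : z = 0 := by nlinarith [(mul_eq_zero.mp hnorm).resolve_left hb, sq_nonneg w]
  have hw : w = 0 := by nlinarith [(mul_eq_zero.mp hnorm).resolve_left hb, sq_nonneg z]
  exact absurd (by rw [hz, hw]) hzw

lemma bifurcationEqs_diag_iff {a b z : ℝ} :
    BifurcationEqs a b z z ↔ z * (2 * (a + 2 * b) * z ^ 2 - 1) = 0 := by
  unfold BifurcationEqs
  constructor
  · rintro ⟨e, -⟩
    linear_combination e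
  · intro h
    constructor <;> linear_combination h

lemma bifurcationEqs_antidiag_iff {a b z : ℝ} :
    BifurcationEqs a b z (-z) ↔ z * (2 * (a - 2 * b) * z ^ 2 - 1) = 0 := by
  unfold BifurcationEqs
  constructor
  · rintro ⟨e, -⟩
    linear_combination e
  · intro h
    constructor
    · linear_combination h
    · linear_combination -h

lemma ne_zero_and_bifurcationEqs_iff {a b z w : ℝ} (hb : b ≠ 0) :
    (z, w) ≠ (0, 0) ∧ BifurcationEqs a b z w ↔
      (w = z ∧ 2 * (a + 2 * b) * z ^ 2 = 1) ∨ (w = -z ∧ 2 * (a - 2 * b) * z ^ 2 = 1) := by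
  constructor
  · rintro ⟨hzw, h⟩
    rcases eq_or_eq_neg_of_bifurcationEqs hb hzw h with rfl | rfl
    · have hz : w ≠ 0 := by rintro rfl; exact hzw rfl
      have hquad := (mul_eq_zero.mp (bifurcationEqs_diag_iff.mp h)).resolve_left hz
      exact Or.inl ⟨rfl, sub_eq_zero.mp hquad⟩
    · have hz : z ≠ 0 := by rintro rfl; exact hzw (by simp)
      have hquad := (mul_eq_zero.mp (bifurcationEqs_antidiag_iff.mp h)).resolve_left hz
      exact Or.inr ⟨rfl, sub_eq_zero.mp hquad⟩
  · rintro (⟨rfl, h⟩ | ⟨rfl, h⟩)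
    · have hz : w ≠ 0 := by rintro rfl; simp at h
      exact ⟨by simp [hz], bifurcationEqs_diag_iff.mpr (by rw [h]; ring)⟩
    · have hz : z ≠ 0 := by rintro rfl; simp at h
      exact ⟨by simp [hz], bifurcationEqs_antidiag_iff.mpr (by rw [h]; ring)⟩

lemma mul_sq_eq_one_iff {p x : ℝ} (hp : 0 < p) :
    p * x ^ 2 = 1 ↔ x = 1 / √p ∨ x = -(1 / √p) := by
  rw [← sq_eq_sq_iff_eq_or_eq_neg, div_pow, Real.sq_sqrt hp.le, eq_div_iff hp.ne', mul_comm]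
  simp

theorem statement12 (a b : ℝ) (h₁ : 0 < a + 2 * b) (h₂ : 0 < a - 2 * b) (hb : b ≠ 0)
    (c d : ℝ) (hc : c = 1 / Real.sqrt (2 * (a + 2 * b)))
    (hd : d = 1 / Real.sqrt (2 * (a - 2 * b))) :
    {zw : ℝ × ℝ | zw ≠ (0, 0) ∧
        zw.1 * (a * zw.1 ^ 2 + 3 * b * zw.1 * zw.2 + a * zw.2 ^ 2 - 1) = -(b * zw.2 ^ 3) ∧
        zw.2 * (a * zw.1 ^ 2 + 3 * b * zw.1 * zw.2 + a * zw.2 ^ 2 - 1) = -(b * zw.1 ^ 3)} =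
      {(c, c), (-c, -c), (d, -d), (-d, d)} := by
  ext ⟨z, w⟩
  change (z, w) ≠ (0, 0) ∧ BifurcationEqs a b z w ↔ _
  rw [ne_zero_and_bifurcationEqs_iff hb, mul_sq_eq_one_iff (by linarith),
    mul_sq_eq_one_iff (by linarith), ← hc, ← hd]
  simp only [mem_insert_iff, mem_singleton_iff, Prod.mk.injEq]
  grind
end
end

section
/- Let a, c, e ∈ ℝ with a > 0, c > 0, e > 0, (a − 3c)(ae − 9c²) > 0 and (e − 3c)(ae − 9c²) > 0. Then the set of solutions (z, w) ∈ ℝ² \ {(0,0)} of the system z(a·z² + 3c·w² − 1) = 0 and w(3c·z² + e·w² − 1) = 0 consists exactly of the eight points (0, 1/√e), (0, −1/√e), (1/√a, 0), (−1/√a, 0), (p, q), (−p, −q), (p, −q), (−p, q), where p := √((e − 3c)/(ae − 9c²)) and q := √((a − 3c)/(ae − 9c²)). -/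
open MeasureTheory Set Filter

noncomputable section

private lemma sq_cases' {x y : ℝ} (h : x ^ 2 = y ^ 2) : x = y ∨ x = -y := by
  have h2 : (x - y) * (x + y) = 0 := by nlinarith
  rcases mul_eq_zero.mp h2 with h' | h'
  · left; linarith
  · right; linarith

theorem statement13 (a c e : ℝ) (ha : 0 < a) (hc : 0 < c) (he : 0 < e)
    (h₁ : 0 < (a - 3 * c) * (a * e - 9 * c ^ 2))
    (h₂ : 0 < (e - 3 * c) * (a * e - 9 * c ^ 2))
    (p q : ℝ) (hp : p = Real.sqrt ((e - 3 * c) / (a * e - 9 * c ^ 2)))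
    (hq : q = Real.sqrt ((a - 3 * c) / (a * e - 9 * c ^ 2))) :
    {zw : ℝ × ℝ | zw ≠ (0, 0) ∧
        zw.1 * (a * zw.1 ^ 2 + 3 * c * zw.2 ^ 2 - 1) = 0 ∧
        zw.2 * (3 * c * zw.1 ^ 2 + e * zw.2 ^ 2 - 1) = 0} =
      {(0, 1 / Real.sqrt e), (0, -(1 / Real.sqrt e)),
        (1 / Real.sqrt a, 0), (-(1 / Real.sqrt a), 0),
        (p, q), (-p, -q), (p, -q), (-p, q)} := by
  have hD : a * e - 9 * c ^ 2 ≠ 0 := by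
    intro h; rw [h, mul_zero] at h₁; exact lt_irrefl 0 h₁
  have hD2 : 0 < (a * e - 9 * c ^ 2) ^ 2 := by positivity
  have hpp : 0 < (e - 3 * c) / (a * e - 9 * c ^ 2) := by
    have h' : (e - 3 * c) / (a * e - 9 * c ^ 2)
        = ((e - 3 * c) * (a * e - 9 * c ^ 2)) / (a * e - 9 * c ^ 2) ^ 2 := by
      field_simp
    rw [h']; exact div_pos h₂ hD2
  have hqq : 0 < (a - 3 * c) / (a * e - 9 * c ^ 2) := by
    have h' : (a - 3 * c) / (a * e - 9 * c ^ 2)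
        = ((a - 3 * c) * (a * e - 9 * c ^ 2)) / (a * e - 9 * c ^ 2) ^ 2 := by
      field_simp
    rw [h']; exact div_pos h₁ hD2
  have hp2 : p ^ 2 = (e - 3 * c) / (a * e - 9 * c ^ 2) := by
    rw [hp]; exact Real.sq_sqrt hpp.le
  have hq2 : q ^ 2 = (a - 3 * c) / (a * e - 9 * c ^ 2) := by
    rw [hq]; exact Real.sq_sqrt hqq.le
  have hp0 : 0 < p := hp ▸ Real.sqrt_pos.mpr hpp
  have hq0 : 0 < q := hq ▸ Real.sqrt_pos.mpr hqq
  have key1 : a * p ^ 2 + 3 * c * q ^ 2 = 1 := by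
    rw [hp2, hq2, mul_div_assoc', mul_div_assoc', ← add_div, div_eq_one_iff_eq hD]; ring
  have key2 : 3 * c * p ^ 2 + e * q ^ 2 = 1 := by
    rw [hp2, hq2, mul_div_assoc', mul_div_assoc', ← add_div, div_eq_one_iff_eq hD]; ring
  have hse : Real.sqrt e ^ 2 = e := Real.sq_sqrt he.le
  have hsa : Real.sqrt a ^ 2 = a := Real.sq_sqrt ha.le
  have hse0 : Real.sqrt e ≠ 0 := (Real.sqrt_pos.mpr he).ne'
  have hsa0 : Real.sqrt a ≠ 0 := (Real.sqrt_pos.mpr ha).ne'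
  ext ⟨z, w⟩
  simp only [mem_setOf_eq, mem_insert_iff, mem_singleton_iff, Prod.mk.injEq, ne_eq]
  constructor
  · rintro ⟨hne, h1, h2⟩
    rcases mul_eq_zero.mp h1 with hz | hz
    · rcases mul_eq_zero.mp h2 with hw | hw
      · exact absurd ⟨hz, hw⟩ hne
      · have hw2 : w ^ 2 = (1 / Real.sqrt e) ^ 2 := by
          rw [div_pow, one_pow, hse, eq_div_iff he.ne']
          rw [hz] at hw
          linear_combination hw
        rcases sq_cases' hw2 with h | h
        · exact Or.inl ⟨hz, h⟩
        · exact Or.inr (Or.inl ⟨hz, h⟩)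
    · rcases mul_eq_zero.mp h2 with hw | hw
      · have hz2 : z ^ 2 = (1 / Real.sqrt a) ^ 2 := by
          rw [div_pow, one_pow, hsa, eq_div_iff ha.ne']
          rw [hw] at hz
          linear_combination hz
        rcases sq_cases' hz2 with h | h
        · exact Or.inr (Or.inr (Or.inl ⟨h, hw⟩))
        · exact Or.inr (Or.inr (Or.inr (Or.inl ⟨h, hw⟩)))
      · have hz2 : z ^ 2 = p ^ 2 := by
          rw [hp2, eq_div_iff hD]
          linear_combination e * hz - 3 * c * hw
        have hw2 : w ^ 2 = q ^ 2 := by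
          rw [hq2, eq_div_iff hD]
          linear_combination a * hw - 3 * c * hz
        rcases sq_cases' hz2 with h | h <;> rcases sq_cases' hw2 with h' | h'
        · exact Or.inr (Or.inr (Or.inr (Or.inr (Or.inl ⟨h, h'⟩))))
        · exact Or.inr (Or.inr (Or.inr (Or.inr (Or.inr (Or.inr (Or.inl ⟨h, h'⟩))))))
        · exact Or.inr (Or.inr (Or.inr (Or.inr (Or.inr (Or.inr (Or.inr ⟨h, h'⟩))))))
        · exact Or.inr (Or.inr (Or.inr (Or.inr (Or.inr (Or.inl ⟨h, h'⟩)))))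
  · have he1 : e * (1 / Real.sqrt e) ^ 2 = 1 := by
      rw [div_pow, one_pow, hse]; field_simp
    have ha1 : a * (1 / Real.sqrt a) ^ 2 = 1 := by
      rw [div_pow, one_pow, hsa]; field_simp
    rintro (⟨hz, hw⟩ | ⟨hz, hw⟩ | ⟨hz, hw⟩ | ⟨hz, hw⟩ | ⟨hz, hw⟩ | ⟨hz, hw⟩ | ⟨hz, hw⟩ | ⟨hz, hw⟩) <;>
        refine ⟨?_, ?_, ?_⟩ <;> rw [hz, hw] <;>
        first
          | (simp [hse0, hsa0, hp0.ne', hq0.ne', neg_eq_zero] <;>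
              first
                | linarith [key1]
                | linarith [key2]
                | (rw [hse, mul_inv_cancel₀ he.ne']; norm_num)
                | (rw [hsa, mul_inv_cancel₀ ha.ne']; norm_num))
          | ring
end
end
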